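/- arXiv:1706.10125 — 9 statements merged into one kernel-verified Lean document; each statement's English description precedes it below -/
import Mathlib

section
/- For the action of G = ℤ/NℤN (N ≥ 3) on ℝ^N by cyclic coordinate shifts, with p₁ = (0,5,0,…,0), p₂ = (0,3,2,0,…,0), p₃ = (2,3,0,…,0) in ℝ^N, there exist no x ∈ [p₁], y ∈ [p₂], z ∈ [p₃] such that simultaneously ‖x−y‖ = d_Q([p₁],[p₂]), ‖x−z‖ = d_Q([p₁],[p₃]) and ‖y−z‖ = d_Q([p₂],[p₃]). In particular no congruent section of ℝ^N/(ℤ/Nℤ) exists. -/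
/-- The cyclic shift action of `ZMod N` on `ℝ^N` (Euclidean norm). -/
noncomputable def cyclicShift (N : ℕ) [NeZero N] (k : ZMod N)
    (x : EuclideanSpace ℝ (ZMod N)) : EuclideanSpace ℝ (ZMod N) :=
  (EuclideanSpace.equiv (ZMod N) ℝ).symm fun i => x (i + k)

/-- `p₁ = (0,5,0,…,0)`. -/
noncomputable def pOne (N : ℕ) [NeZero N] : EuclideanSpace ℝ (ZMod N) :=
  (EuclideanSpace.equiv (ZMod N) ℝ).symm fun i => if i = 1 then 5 else 0

/-- `p₂ = (0,3,2,0,…,0)`. -/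
noncomputable def pTwo (N : ℕ) [NeZero N] : EuclideanSpace ℝ (ZMod N) :=
  (EuclideanSpace.equiv (ZMod N) ℝ).symm fun i =>
    if i = 1 then 3 else if i = 2 then 2 else 0

/-- `p₃ = (2,3,0,…,0)`. -/
noncomputable def pThree (N : ℕ) [NeZero N] : EuclideanSpace ℝ (ZMod N) :=
  (EuclideanSpace.equiv (ZMod N) ℝ).symm fun i =>
    if i = 0 then 2 else if i = 1 then 3 else 0

section Aux

variable (N : ℕ) [NeZero N]

lemma cyclicShift_apply (k : ZMod N) (x : EuclideanSpace ℝ (ZMod N)) (i : ZMod N) :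
    cyclicShift N k x i = x (i + k) := rfl

lemma euc_sub_apply (u v : EuclideanSpace ℝ (ZMod N)) (i : ZMod N) :
    (u - v) i = u i - v i := rfl

lemma pOne_apply (i : ZMod N) : pOne N i = if i = 1 then 5 else 0 := rfl

lemma pTwo_apply (i : ZMod N) :
    pTwo N i = if i = 1 then 3 else if i = 2 then 2 else 0 := rfl

lemma pThree_apply (i : ZMod N) :
    pThree N i = if i = 0 then 2 else if i = 1 then 3 else 0 := rfl

lemma norm_sq_eq (v : EuclideanSpace ℝ (ZMod N)) : ‖v‖^2 = ∑ i, (v i)^2 := by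
  rw [EuclideanSpace.norm_eq, Real.sq_sqrt (Finset.sum_nonneg fun i _ => sq_nonneg _)]
  simp [Real.norm_eq_abs, sq_abs]

lemma norm_shift (k : ZMod N) (v : EuclideanSpace ℝ (ZMod N)) :
    ‖cyclicShift N k v‖ = ‖v‖ := by
  rw [EuclideanSpace.norm_eq, EuclideanSpace.norm_eq]
  congr 1
  exact Fintype.sum_equiv (Equiv.addRight k) _ _ (fun i => rfl)

lemma shift_shift (a b : ZMod N) (v : EuclideanSpace ℝ (ZMod N)) :
    cyclicShift N a (cyclicShift N b v) = cyclicShift N (b + a) v := by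
  ext i
  simp only [cyclicShift_apply]
  rw [show i + a + b = i + (b + a) by ring]

lemma shift_sub (k : ZMod N) (u v : EuclideanSpace ℝ (ZMod N)) :
    cyclicShift N k (u - v) = cyclicShift N k u - cyclicShift N k v := by
  ext i
  simp [cyclicShift_apply, euc_sub_apply]

lemma shift_zero (v : EuclideanSpace ℝ (ZMod N)) : cyclicShift N 0 v = v := by
  ext i
  rw [cyclicShift_apply, add_zero]

lemma norm_shift_sub (a b : ZMod N) (u v : EuclideanSpace ℝ (ZMod N)) :
    ‖cyclicShift N a u - cyclicShift N b v‖ = ‖u - cyclicShift N (b - a) v‖ := by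
  rw [← norm_shift N a (u - cyclicShift N (b - a) v), shift_sub, shift_shift, sub_add_cancel]

omit [NeZero N] in
lemma zmod_ne (a b : ℕ) (ha : a < N) (hb : b < N) (h : a ≠ b) :
    (a : ZMod N) ≠ (b : ZMod N) := fun e =>
  h (by rw [← ZMod.val_cast_of_lt ha, ← ZMod.val_cast_of_lt hb, e])

lemma sum_pair_support (f : ZMod N → ℝ) (a b : ZMod N) (hab : a ≠ b)
    (h0 : ∀ i, i ≠ a → i ≠ b → f i = 0) :
    ∑ i, f i = f a + f b := by
  rw [← Finset.sum_subset (Finset.subset_univ ({a, b} : Finset (ZMod N)))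
      (fun i _ hi => by
        simp only [Finset.mem_insert, Finset.mem_singleton, not_or] at hi
        exact h0 i hi.1 hi.2)]
  rw [Finset.sum_pair hab]

lemma pair_le_sum (f : ZMod N → ℝ) (a b : ZMod N) (hab : a ≠ b)
    (hnn : ∀ i, 0 ≤ f i) : f a + f b ≤ ∑ i, f i := by
  rw [← Finset.sum_pair hab]
  exact Finset.sum_le_sum_of_subset_of_nonneg (Finset.subset_univ _) (fun i _ _ => hnn i)

end Aux

/-- For the cyclic shift action of `ℤ/Nℤ` (N ≥ 3) on `ℝ^N`, there are no
representatives `x ∈ [p₁]`, `y ∈ [p₂]`, `z ∈ [p₃]` realizing simultaneously all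
three pairwise quotient distances; hence no congruent section exists. -/
theorem stmt3 (N : ℕ) [NeZero N] (hN : 3 ≤ N) :
    ¬ ∃ k₁ k₂ k₃ : ZMod N,
      ‖cyclicShift N k₁ (pOne N) - cyclicShift N k₂ (pTwo N)‖ =
          (⨅ k : ZMod N, ‖pOne N - cyclicShift N k (pTwo N)‖) ∧
      ‖cyclicShift N k₁ (pOne N) - cyclicShift N k₃ (pThree N)‖ =
          (⨅ k : ZMod N, ‖pOne N - cyclicShift N k (pThree N)‖) ∧
      ‖cyclicShift N k₂ (pTwo N) - cyclicShift N k₃ (pThree N)‖ =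
          (⨅ k : ZMod N, ‖pTwo N - cyclicShift N k (pThree N)‖) := by
  have h01 : (0 : ZMod N) ≠ 1 := by
    exact_mod_cast zmod_ne N 0 1 (by omega) (by omega) (by omega)
  have h02 : (0 : ZMod N) ≠ 2 := by
    exact_mod_cast zmod_ne N 0 2 (by omega) (by omega) (by omega)
  have h12 : (1 : ZMod N) ≠ 2 := by
    exact_mod_cast zmod_ne N 1 2 (by omega) (by omega) (by omega)
  have h10 := h01.symm
  have h20 := h02.symm
  have h21 := h12.symm
  rintro ⟨k₁, k₂, k₃, h1, h2, h3⟩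
  rw [norm_shift_sub] at h1 h2 h3
  -- bounded below facts
  have bdd2 : BddBelow (Set.range fun k : ZMod N => ‖pOne N - cyclicShift N k (pTwo N)‖) :=
    ⟨0, by rintro _ ⟨k, rfl⟩; exact norm_nonneg _⟩
  have bdd3 : BddBelow (Set.range fun k : ZMod N => ‖pOne N - cyclicShift N k (pThree N)‖) :=
    ⟨0, by rintro _ ⟨k, rfl⟩; exact norm_nonneg _⟩
  have bdd23 : BddBelow (Set.range fun k : ZMod N => ‖pTwo N - cyclicShift N k (pThree N)‖) :=
    ⟨0, by rintro _ ⟨k, rfl⟩; exact norm_nonneg _⟩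
  have inf2nn : (0:ℝ) ≤ ⨅ k : ZMod N, ‖pOne N - cyclicShift N k (pTwo N)‖ :=
    Real.iInf_nonneg fun k => norm_nonneg _
  have inf3nn : (0:ℝ) ≤ ⨅ k : ZMod N, ‖pOne N - cyclicShift N k (pThree N)‖ :=
    Real.iInf_nonneg fun k => norm_nonneg _
  have inf23nn : (0:ℝ) ≤ ⨅ k : ZMod N, ‖pTwo N - cyclicShift N k (pThree N)‖ :=
    Real.iInf_nonneg fun k => norm_nonneg _
  -- Step 1 : k₂ = k₁
  have hk21 : k₂ - k₁ = 0 := by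
    by_contra hk
    have h1k : (1 : ZMod N) + (k₂ - k₁) ≠ 1 := fun h => hk (by simpa using h)
    have hterm : (9:ℝ) ≤ ((pOne N - cyclicShift N (k₂ - k₁) (pTwo N)) 1)^2 := by
      rw [euc_sub_apply, cyclicShift_apply, pOne_apply, pTwo_apply, if_pos rfl, if_neg h1k]
      split_ifs <;> norm_num
    have hge : (9:ℝ) ≤ ‖pOne N - cyclicShift N (k₂ - k₁) (pTwo N)‖^2 := by
      rw [norm_sq_eq]
      exact le_trans hterm (Finset.single_le_sum
        (f := fun i => ((pOne N - cyclicShift N (k₂ - k₁) (pTwo N)) i)^2)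
        (fun i _ => sq_nonneg _) (Finset.mem_univ (1 : ZMod N)))
    have hupper : (⨅ k : ZMod N, ‖pOne N - cyclicShift N k (pTwo N)‖) ≤ ‖pOne N - pTwo N‖ := by
      have := ciInf_le bdd2 (0 : ZMod N)
      rwa [shift_zero] at this
    have hval : ‖pOne N - pTwo N‖^2 = 8 := by
      rw [norm_sq_eq, sum_pair_support N _ 1 2 h12
        (fun i hi1 hi2 => by simp [euc_sub_apply, pOne_apply, pTwo_apply, hi1, hi2])]
      norm_num [euc_sub_apply, pOne_apply, pTwo_apply, h21]
    have hsq : (⨅ k : ZMod N, ‖pOne N - cyclicShift N k (pTwo N)‖)^2 ≤ 8 := by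
      calc (⨅ k : ZMod N, ‖pOne N - cyclicShift N k (pTwo N)‖)^2
          ≤ ‖pOne N - pTwo N‖^2 := pow_le_pow_left₀ inf2nn hupper 2
        _ = 8 := hval
    rw [h1] at hge
    linarith
  -- Step 2 : k₃ = k₁
  have hk31 : k₃ - k₁ = 0 := by
    by_contra hk
    have h1k : (1 : ZMod N) + (k₃ - k₁) ≠ 1 := fun h => hk (by simpa using h)
    have hterm : (9:ℝ) ≤ ((pOne N - cyclicShift N (k₃ - k₁) (pThree N)) 1)^2 := by
      rw [euc_sub_apply, cyclicShift_apply, pOne_apply, pThree_apply, if_pos rfl, if_neg h1k]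
      split_ifs <;> norm_num
    have hge : (9:ℝ) ≤ ‖pOne N - cyclicShift N (k₃ - k₁) (pThree N)‖^2 := by
      rw [norm_sq_eq]
      exact le_trans hterm (Finset.single_le_sum
        (f := fun i => ((pOne N - cyclicShift N (k₃ - k₁) (pThree N)) i)^2)
        (fun i _ => sq_nonneg _) (Finset.mem_univ (1 : ZMod N)))
    have hupper : (⨅ k : ZMod N, ‖pOne N - cyclicShift N k (pThree N)‖) ≤ ‖pOne N - pThree N‖ := by
      have := ciInf_le bdd3 (0 : ZMod N)
      rwa [shift_zero] at this
    have hval : ‖pOne N - pThree N‖^2 = 8 := by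
      rw [norm_sq_eq, sum_pair_support N _ 0 1 h01
        (fun i hi0 hi1 => by simp [euc_sub_apply, pOne_apply, pThree_apply, hi0, hi1])]
      norm_num [euc_sub_apply, pOne_apply, pThree_apply, h01, h10]
    have hsq : (⨅ k : ZMod N, ‖pOne N - cyclicShift N k (pThree N)‖)^2 ≤ 8 := by
      calc (⨅ k : ZMod N, ‖pOne N - cyclicShift N k (pThree N)‖)^2
          ≤ ‖pOne N - pThree N‖^2 := pow_le_pow_left₀ inf3nn hupper 2
        _ = 8 := hval
    rw [h2] at hge
    linarith
  -- hence k₃ - k₂ = 0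
  have hk32 : k₃ - k₂ = 0 := by
    have e1 : k₂ = k₁ := sub_eq_zero.mp hk21
    have e2 : k₃ = k₁ := sub_eq_zero.mp hk31
    rw [e1, e2, sub_self]
  rw [hk32, shift_zero] at h3
  -- lower bound for ‖p₂ - p₃‖²
  have hgeN : (8:ℝ) ≤ ‖pTwo N - pThree N‖^2 := by
    rw [norm_sq_eq]
    have hps : ((pTwo N - pThree N) 0)^2 + ((pTwo N - pThree N) 2)^2 ≤
        ∑ i : ZMod N, ((pTwo N - pThree N) i)^2 :=
      pair_le_sum N (fun i => ((pTwo N - pThree N) i)^2) 0 2 h02 (fun i => sq_nonneg _)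
    have e0 : ((pTwo N - pThree N) 0)^2 = 4 := by
      norm_num [euc_sub_apply, pTwo_apply, pThree_apply, h01, h02]
    have e2 : ((pTwo N - pThree N) 2)^2 = 4 := by
      norm_num [euc_sub_apply, pTwo_apply, pThree_apply, h21, h20]
    rw [e0, e2] at hps
    linarith
  -- upper bound : value at k = -1 is √2
  have hval23 : ‖pTwo N - cyclicShift N (-1) (pThree N)‖^2 = 2 := by
    have key : ∀ i : ZMod N, i ≠ 1 → i ≠ 2 →
        ((pTwo N - cyclicShift N (-1) (pThree N)) i)^2 = 0 := by
      intro i hi1 hi2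
      have hA : i + (-1) ≠ 0 := fun h => hi1 (by
        have : i = 1 := by linear_combination h
        exact this)
      have hB : i + (-1) ≠ 1 := fun h => hi2 (by
        have : i = 2 := by linear_combination h
        exact this)
      simp [euc_sub_apply, cyclicShift_apply, pTwo_apply, pThree_apply, hi1, hi2, hA, hB]
    rw [norm_sq_eq, sum_pair_support N _ 1 2 h12 key]
    have eA : (1 : ZMod N) + (-1) = 0 := by ring
    have eB : (2 : ZMod N) + (-1) = 1 := by ring
    rw [euc_sub_apply, euc_sub_apply, cyclicShift_apply, cyclicShift_apply, eA, eB]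
    norm_num [pTwo_apply, pThree_apply, h21, h10]
  have hupper23 : (⨅ k : ZMod N, ‖pTwo N - cyclicShift N k (pThree N)‖)^2 ≤ 2 := by
    have hle := ciInf_le bdd23 (-1 : ZMod N)
    calc (⨅ k : ZMod N, ‖pTwo N - cyclicShift N k (pThree N)‖)^2
        ≤ ‖pTwo N - cyclicShift N (-1) (pThree N)‖^2 := pow_le_pow_left₀ inf23nn hle 2
      _ = 2 := hval23
  rw [h3] at hgeN
  linarith
end

section
/- Let G act by linear isometries on a Hilbert space M, let ε be a random variable in M with E(ε)=0 and E(‖ε‖²)=1, whose support is not contained in the set of fixed points of the G-action. Then K := sup_{‖v‖=1} E(sup_{g∈G} ⟨v, g·ε⟩) is strictly positive. -/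
open MeasureTheory ProbabilityTheory RealInnerProductSpace

/-- If the support of the standardized noise `ε` is not contained in the set of
fixed points of a group acting by linear isometries on a Hilbert space, then
`K = sup_{‖v‖=1} E(sup_g ⟪v, g·ε⟫) > 0`. -/
theorem stmt4 {M : Type*} [NormedAddCommGroup M] [InnerProductSpace ℝ M]
    {G : Type*} [Group G] (ρ : G →* (M →ₗᵢ[ℝ] M))
    {Ω : Type*} [MeasureSpace Ω] [IsProbabilityMeasure (ℙ : Measure Ω)]
    (ε : Ω → M) (hmeas : AEStronglyMeasurable ε ℙ)
    (hint : Integrable ε) (hmean : (∫ ω, ε ω) = 0)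
    (hvar : (∫ ω, ‖ε ω‖ ^ 2) = 1)
    (hintsup : ∀ v : M, ‖v‖ = 1 → Integrable (fun ω => ⨆ g : G, ⟪v, ρ g (ε ω)⟫))
    (hsupp : ∃ x : M, (∀ r > 0, 0 < ℙ (ε ⁻¹' Metric.ball x r)) ∧ ∃ g : G, ρ g x ≠ x) :
    0 < ⨆ v : {v : M // ‖v‖ = 1}, ∫ ω, ⨆ g : G, ⟪v.1, ρ g (ε ω)⟫ := by
  obtain ⟨x, hx, g₀, hg₀⟩ := hsupp
  set w : M := ρ g₀ x - x with hw
  have hc : (0 : ℝ) < ‖w‖ := by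
    rw [norm_pos_iff]
    exact sub_ne_zero.mpr hg₀
  set c : ℝ := ‖w‖ with hcdef
  set v : M := c⁻¹ • w with hvdef
  have hv : ‖v‖ = 1 := by
    rw [hvdef, norm_smul, norm_inv, Real.norm_eq_abs, abs_of_pos hc, inv_mul_cancel₀ hc.ne']
  have hv' : ‖-v‖ = 1 := by rw [norm_neg, hv]
  -- bound on inner products via Cauchy-Schwarz and isometry
  have hbound : ∀ (u : M), ‖u‖ = 1 → ∀ (g : G) (y : M), ⟪u, ρ g y⟫ ≤ ‖y‖ := by
    intro u hu g y
    calc ⟪u, ρ g y⟫ ≤ ‖u‖ * ‖ρ g y‖ := real_inner_le_norm _ _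
    _ = ‖y‖ := by rw [hu, (ρ g).norm_map, one_mul]
  have hbdd : ∀ (u : M), ‖u‖ = 1 → ∀ y : M,
      BddAbove (Set.range fun g : G => ⟪u, ρ g y⟫) := by
    intro u hu y
    exact ⟨‖y‖, by rintro _ ⟨g, rfl⟩; exact hbound u hu g y⟩
  -- the function whose integral is positive
  set f : Ω → ℝ := fun ω => |⟪v, ρ g₀ (ε ω) - ε ω⟫| with hfdef
  have hfmeas : AEStronglyMeasurable f ℙ := by
    have h1 : AEStronglyMeasurable (fun ω => ⟪v, ρ g₀ (ε ω) - ε ω⟫) ℙ :=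
      AEStronglyMeasurable.inner aestronglyMeasurable_const
        (((ρ g₀).continuous.comp_aestronglyMeasurable hmeas).sub hmeas)
    simpa [hfdef, Real.norm_eq_abs] using h1.norm
  have hfle : ∀ ω, f ω ≤ 2 * ‖ε ω‖ := by
    intro ω
    calc f ω ≤ ‖v‖ * ‖ρ g₀ (ε ω) - ε ω‖ := abs_real_inner_le_norm _ _
    _ ≤ 1 * (‖ρ g₀ (ε ω)‖ + ‖ε ω‖) := by
        rw [hv]; exact mul_le_mul_of_nonneg_left (norm_sub_le _ _) zero_le_one
    _ = 2 * ‖ε ω‖ := by rw [(ρ g₀).norm_map]; ring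
  have hfint : Integrable f := by
    refine (hint.norm.const_mul 2).mono hfmeas (Filter.Eventually.of_forall fun ω => ?_)
    rw [Real.norm_eq_abs, abs_abs, Real.norm_eq_abs]
    exact (hfle ω).trans (le_abs_self _)
  -- inner product with the direction w equals c
  have hvw : ⟪v, w⟫ = c := by
    rw [hvdef, real_inner_smul_left, real_inner_self_eq_norm_sq, ← hcdef]
    field_simp
  -- on the ball event, f is at least c/2
  have hkey : ∀ ω, ε ω ∈ Metric.ball x (c / 4) → c / 2 ≤ ⟪v, ρ g₀ (ε ω) - ε ω⟫ := by
    intro ω hω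
    have hdist : ‖ε ω - x‖ < c / 4 := by
      rw [← dist_eq_norm]; exact hω
    have hsplit : ρ g₀ (ε ω) - ε ω = w + (ρ g₀ (ε ω - x) - (ε ω - x)) := by
      rw [hw, (ρ g₀).map_sub]; abel
    rw [hsplit, inner_add_right, hvw]
    have h2 : |⟪v, ρ g₀ (ε ω - x) - (ε ω - x)⟫| ≤ 2 * ‖ε ω - x‖ := by
      calc |⟪v, ρ g₀ (ε ω - x) - (ε ω - x)⟫| ≤ ‖v‖ * ‖ρ g₀ (ε ω - x) - (ε ω - x)‖ :=
        abs_real_inner_le_norm _ _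
      _ ≤ 1 * (‖ρ g₀ (ε ω - x)‖ + ‖ε ω - x‖) := by
          rw [hv]; exact mul_le_mul_of_nonneg_left (norm_sub_le _ _) zero_le_one
      _ = 2 * ‖ε ω - x‖ := by rw [(ρ g₀).norm_map]; ring
    have := (abs_le.mp h2).1
    nlinarith
  -- ∫ f > 0
  have hfpos : 0 < ∫ ω, f ω := by
    rw [integral_pos_iff_support_of_nonneg (fun ω => abs_nonneg _) hfint]
    refine lt_of_lt_of_le (hx (c / 4) (by linarith)) (measure_mono ?_)
    intro ω hω
    have := hkey ω hω
    simp only [Function.mem_support, hfdef]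
    intro habs
    rw [abs_eq_zero.mp habs] at this
    linarith
  -- pointwise: f ≤ sup with v + sup with -v
  have hpt : ∀ ω, f ω ≤ (⨆ g : G, ⟪v, ρ g (ε ω)⟫) + ⨆ g : G, ⟪-v, ρ g (ε ω)⟫ := by
    intro ω
    have h1 : ⟪v, ρ g₀ (ε ω)⟫ ≤ ⨆ g : G, ⟪v, ρ g (ε ω)⟫ :=
      le_ciSup (hbdd v hv (ε ω)) g₀
    have h1' : ⟪v, ρ 1 (ε ω)⟫ ≤ ⨆ g : G, ⟪v, ρ g (ε ω)⟫ :=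
      le_ciSup (hbdd v hv (ε ω)) 1
    have h2 : ⟪-v, ρ g₀ (ε ω)⟫ ≤ ⨆ g : G, ⟪-v, ρ g (ε ω)⟫ :=
      le_ciSup (hbdd (-v) hv' (ε ω)) g₀
    have h2' : ⟪-v, ρ 1 (ε ω)⟫ ≤ ⨆ g : G, ⟪-v, ρ g (ε ω)⟫ :=
      le_ciSup (hbdd (-v) hv' (ε ω)) 1
    have hone : ∀ u : M, ρ 1 u = u := by
      intro u; rw [map_one]; rfl
    rw [hone] at h1' h2'
    rw [inner_neg_left] at h2 h2'
    rw [hfdef]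
    simp only [inner_sub_right]
    rw [abs_le]
    constructor <;> linarith
  -- hence the sum of two integrals is positive
  have hsum : 0 < (∫ ω, ⨆ g : G, ⟪v, ρ g (ε ω)⟫) + ∫ ω, ⨆ g : G, ⟪-v, ρ g (ε ω)⟫ := by
    have := integral_mono hfint ((hintsup v hv).add (hintsup (-v) hv')) hpt
    simp only [Pi.add_apply] at this
    rw [integral_add (hintsup v hv) (hintsup (-v) hv')] at this
    linarith
  -- the iSup is bounded above
  have hbddsup : BddAbove (Set.range fun u : {u : M // ‖u‖ = 1} =>
      ∫ ω, ⨆ g : G, ⟪u.1, ρ g (ε ω)⟫) := by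
    refine ⟨∫ ω, ‖ε ω‖, ?_⟩
    rintro _ ⟨⟨u, hu⟩, rfl⟩
    exact integral_mono (hintsup u hu) hint.norm
      (fun ω => ciSup_le fun g => hbound u hu g (ε ω))
  rcases lt_or_ge 0 (∫ ω, ⨆ g : G, ⟪v, ρ g (ε ω)⟫) with h | h
  · exact lt_of_lt_of_le h (le_ciSup hbddsup ⟨v, hv⟩)
  · refine lt_of_lt_of_le ?_ (le_ciSup hbddsup ⟨-v, hv'⟩)
    linarith
end

section
/- Let Y = Φ·t₀ + σε where G acts by linear isometries on a Hilbert space M, Φ is a G-valued random variable, ε is centered with E(‖ε‖²)=1, and Φ, ε are independent. Define F(x) = E(inf_{g∈G} ‖x − g·Y‖²). If m⋆ minimizes F over M, then ‖m⋆‖ satisfies σK − ‖t₀‖ ≤ ‖m⋆‖ ≤ σK + ‖t₀‖, where K = sup_{‖v‖=1} E(sup_{g∈G} ⟨v, g·ε⟩). -/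
open MeasureTheory ProbabilityTheory RealInnerProductSpace

section aux
variable {M : Type*} [NormedAddCommGroup M] [InnerProductSpace ℝ M]
  {G : Type*} [Group G] (ρ : G →* (M →ₗᵢ[ℝ] M))

lemma auxBdd (x y : M) : BddAbove (Set.range fun g : G => ⟪x, ρ g y⟫) := by
  refine ⟨‖x‖ * ‖y‖, ?_⟩
  rintro _ ⟨g, rfl⟩
  calc ⟪x, ρ g y⟫ ≤ ‖x‖ * ‖ρ g y‖ := real_inner_le_norm _ _
    _ = ‖x‖ * ‖y‖ := by rw [(ρ g).norm_map]

lemma auxInf (x y : M) :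
    (⨅ g : G, ‖x - ρ g y‖ ^ 2) = ‖x‖ ^ 2 + ‖y‖ ^ 2 - 2 * ⨆ g : G, ⟪x, ρ g y⟫ := by
  have h1 : ∀ g : G, ‖x - ρ g y‖ ^ 2 = ‖x‖ ^ 2 + ‖y‖ ^ 2 - 2 * ⟪x, ρ g y⟫ := by
    intro g
    rw [norm_sub_sq_real, (ρ g).norm_map]; ring
  simp_rw [h1]
  have hA : Antitone (fun z : ℝ => ‖x‖ ^ 2 + ‖y‖ ^ 2 - 2 * z) := by
    intro a b hab; simp only; linarith
  have := hA.map_ciSup_of_continuousAt (f := fun z : ℝ => ‖x‖ ^ 2 + ‖y‖ ^ 2 - 2 * z)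
    (g := fun g : G => ⟪x, ρ g y⟫) (by fun_prop) (auxBdd ρ x y)
  exact this.symm

lemma auxUp (v a e : M) {σ : ℝ} (hσ : 0 ≤ σ) :
    (⨆ g : G, ⟪v, ρ g (a + σ • e)⟫) ≤ σ * (⨆ g : G, ⟪v, ρ g e⟫) + ‖v‖ * ‖a‖ := by
  apply ciSup_le
  intro g
  have hmap : ρ g (a + σ • e) = ρ g a + σ • ρ g e := by
    rw [map_add, (ρ g).map_smul]
  rw [hmap, inner_add_right, real_inner_smul_right]
  have h1 : ⟪v, ρ g a⟫ ≤ ‖v‖ * ‖a‖ := by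
    calc ⟪v, ρ g a⟫ ≤ ‖v‖ * ‖ρ g a‖ := real_inner_le_norm _ _
      _ = ‖v‖ * ‖a‖ := by rw [(ρ g).norm_map]
  have h2 : ⟪v, ρ g e⟫ ≤ ⨆ g : G, ⟪v, ρ g e⟫ := le_ciSup (auxBdd ρ v e) g
  nlinarith

lemma auxLo (v a e : M) {σ : ℝ} (hσ : 0 ≤ σ) :
    σ * (⨆ g : G, ⟪v, ρ g e⟫) - ‖v‖ * ‖a‖ ≤ ⨆ g : G, ⟪v, ρ g (a + σ • e)⟫ := by
  rw [Real.mul_iSup_of_nonneg hσ, sub_le_iff_le_add]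
  apply ciSup_le
  intro g
  have hmap : ρ g (a + σ • e) = ρ g a + σ • ρ g e := by
    rw [map_add, (ρ g).map_smul]
  have h1 : |⟪v, ρ g a⟫| ≤ ‖v‖ * ‖a‖ := by
    calc |⟪v, ρ g a⟫| ≤ ‖v‖ * ‖ρ g a‖ := abs_real_inner_le_norm _ _
      _ = ‖v‖ * ‖a‖ := by rw [(ρ g).norm_map]
  have h2 : ⟪v, ρ g (a + σ • e)⟫ ≤ ⨆ g : G, ⟪v, ρ g (a + σ • e)⟫ :=
    le_ciSup (auxBdd ρ v (a + σ • e)) g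
  rw [hmap, inner_add_right, real_inner_smul_right] at h2
  have := neg_abs_le ⟪v, ρ g a⟫
  linarith

end aux

theorem stmt6_aux {M : Type*} [NormedAddCommGroup M] [InnerProductSpace ℝ M]
    {G : Type*} [Group G] (ρ : G →* (M →ₗᵢ[ℝ] M))
    {Ω : Type*} [MeasureSpace Ω] [IsProbabilityMeasure (ℙ : Measure Ω)]
    (t₀ : M) (σ : ℝ) (hσ : 0 < σ) (Φ : Ω → G) (ε : Ω → M) (Y : Ω → M)
    (hYeq : ∀ ω, Y ω = ρ (Φ ω) t₀ + σ • ε ω)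
    (hint : Integrable ε)
    (hY2 : Integrable (fun ω => ‖Y ω‖ ^ 2))
    (hintsupε : ∀ v : M, ‖v‖ = 1 → Integrable (fun ω => ⨆ g : G, ⟪v, ρ g (ε ω)⟫))
    (hintsupY : ∀ v : M, ‖v‖ = 1 → Integrable (fun ω => ⨆ g : G, ⟪v, ρ g (Y ω)⟫))
    (F : M → ℝ) (hF : ∀ x, F x = ∫ ω, ⨅ g : G, ‖x - ρ g (Y ω)‖ ^ 2)
    (K : ℝ) (hK : K = ⨆ v : {v : M // ‖v‖ = 1}, ∫ ω, ⨆ g : G, ⟪v.1, ρ g (ε ω)⟫)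
    (mstar : M) (hmin : ∀ x, F mstar ≤ F x) :
    σ * K - ‖t₀‖ ≤ ‖mstar‖ ∧ ‖mstar‖ ≤ σ * K + ‖t₀‖ := by
  -- F at scaled unit vectors
  have hFr : ∀ v : M, ‖v‖ = 1 → ∀ r : ℝ, 0 ≤ r →
      F (r • v) = r ^ 2 + (∫ ω, ‖Y ω‖ ^ 2) -
        2 * (r * ∫ ω, ⨆ g : G, ⟪v, ρ g (Y ω)⟫) := by
    intro v hv r hr
    rw [hF]
    have hpt : ∀ ω, (⨅ g : G, ‖r • v - ρ g (Y ω)‖ ^ 2)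
        = (r ^ 2 + ‖Y ω‖ ^ 2) - (2 * r) * ⨆ g : G, ⟪v, ρ g (Y ω)⟫ := by
      intro ω
      rw [auxInf ρ (r • v) (Y ω)]
      have h1 : ‖r • v‖ ^ 2 = r ^ 2 := by
        rw [norm_smul, hv, mul_one, Real.norm_eq_abs, sq_abs]
      have h2 : (⨆ g : G, ⟪r • v, ρ g (Y ω)⟫) = r * ⨆ g : G, ⟪v, ρ g (Y ω)⟫ := by
        simp_rw [real_inner_smul_left]
        exact (Real.mul_iSup_of_nonneg hr _).symm
      rw [h1, h2]; ring
    simp_rw [hpt]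
    have hi1 : Integrable (fun ω => r ^ 2 + ‖Y ω‖ ^ 2) := (integrable_const _).add hY2
    have hi2 : Integrable (fun ω => (2 * r) * ⨆ g : G, ⟪v, ρ g (Y ω)⟫) :=
      (hintsupY v hv).const_mul _
    rw [integral_sub hi1 hi2, integral_add (integrable_const _) hY2,
      integral_const_mul, integral_const]
    simp only [measure_univ, probReal_univ, ENNReal.toReal_one, smul_eq_mul, one_mul]
    ring
  have hF0 : F 0 = ∫ ω, ‖Y ω‖ ^ 2 := by
    rw [hF]
    have hpt : ∀ ω, (⨅ g : G, ‖(0 : M) - ρ g (Y ω)‖ ^ 2) = ‖Y ω‖ ^ 2 := by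
      intro ω
      have h1 : ∀ g : G, ‖(0 : M) - ρ g (Y ω)‖ ^ 2 = ‖Y ω‖ ^ 2 := fun g => by
        rw [zero_sub, norm_neg, (ρ g).norm_map]
      simp_rw [h1]
      exact ciInf_const
    simp_rw [hpt]
  -- sandwich, integrated
  have hub : ∀ v : M, ‖v‖ = 1 → (∫ ω, ⨆ g : G, ⟪v, ρ g (Y ω)⟫)
      ≤ σ * (∫ ω, ⨆ g : G, ⟪v, ρ g (ε ω)⟫) + ‖t₀‖ := by
    intro v hv
    have hpt : ∀ ω, (⨆ g : G, ⟪v, ρ g (Y ω)⟫)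
        ≤ σ * (⨆ g : G, ⟪v, ρ g (ε ω)⟫) + ‖t₀‖ := by
      intro ω
      have := auxUp ρ v (ρ (Φ ω) t₀) (ε ω) hσ.le
      rw [← hYeq ω, hv, one_mul, (ρ (Φ ω)).norm_map] at this
      exact this
    calc (∫ ω, ⨆ g : G, ⟪v, ρ g (Y ω)⟫)
        ≤ ∫ ω, (σ * (⨆ g : G, ⟪v, ρ g (ε ω)⟫) + ‖t₀‖) :=
          integral_mono (hintsupY v hv)
            (by exact ((hintsupε v hv).const_mul σ).add (integrable_const _)) hpt
      _ = σ * (∫ ω, ⨆ g : G, ⟪v, ρ g (ε ω)⟫) + ‖t₀‖ := by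
          rw [integral_add (by exact (hintsupε v hv).const_mul σ) (integrable_const _),
            integral_const_mul, integral_const]
          simp [measure_univ]
  have hlb : ∀ v : M, ‖v‖ = 1 → σ * (∫ ω, ⨆ g : G, ⟪v, ρ g (ε ω)⟫) - ‖t₀‖
      ≤ ∫ ω, ⨆ g : G, ⟪v, ρ g (Y ω)⟫ := by
    intro v hv
    have hpt : ∀ ω, σ * (⨆ g : G, ⟪v, ρ g (ε ω)⟫) - ‖t₀‖
        ≤ ⨆ g : G, ⟪v, ρ g (Y ω)⟫ := by
      intro ω
      have := auxLo ρ v (ρ (Φ ω) t₀) (ε ω) hσ.le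
      rw [← hYeq ω, hv, one_mul, (ρ (Φ ω)).norm_map] at this
      exact this
    calc σ * (∫ ω, ⨆ g : G, ⟪v, ρ g (ε ω)⟫) - ‖t₀‖
        = ∫ ω, (σ * (⨆ g : G, ⟪v, ρ g (ε ω)⟫) - ‖t₀‖) := by
          rw [integral_sub (by exact (hintsupε v hv).const_mul σ) (integrable_const _),
            integral_const_mul, integral_const]
          simp [measure_univ]
      _ ≤ ∫ ω, ⨆ g : G, ⟪v, ρ g (Y ω)⟫ :=
          integral_mono
            (by exact ((hintsupε v hv).const_mul σ).sub (integrable_const _))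
            (hintsupY v hv) hpt
  -- Jε bounded over the sphere
  have hJεle : ∀ v : M, ‖v‖ = 1 → (∫ ω, ⨆ g : G, ⟪v, ρ g (ε ω)⟫) ≤ ∫ ω, ‖ε ω‖ := by
    intro v hv
    refine integral_mono (hintsupε v hv) hint.norm fun ω => ?_
    apply ciSup_le
    intro g
    calc ⟪v, ρ g (ε ω)⟫ ≤ ‖v‖ * ‖ρ g (ε ω)‖ := real_inner_le_norm _ _
      _ = ‖ε ω‖ := by rw [hv, one_mul, (ρ g).norm_map]
  have hKge : ∀ v : M, (hv : ‖v‖ = 1) → (∫ ω, ⨆ g : G, ⟪v, ρ g (ε ω)⟫) ≤ K := by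
    intro v hv
    rw [hK]
    exact le_ciSup (f := fun v : {v : M // ‖v‖ = 1} => ∫ ω, ⨆ g : G, ⟪v.1, ρ g (ε ω)⟫)
      ⟨∫ ω, ‖ε ω‖, by rintro _ ⟨w, rfl⟩; exact hJεle w.1 w.2⟩ ⟨v, hv⟩
  by_cases hsph : Nonempty {v : M // ‖v‖ = 1}
  · -- K nonneg
    have hK0 : 0 ≤ K := by
      obtain ⟨⟨v, hv⟩⟩ := hsph
      have hvn : ‖-v‖ = 1 := by rw [norm_neg, hv]
      have hsum : 0 ≤ (∫ ω, ⨆ g : G, ⟪v, ρ g (ε ω)⟫)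
          + ∫ ω, ⨆ g : G, ⟪-v, ρ g (ε ω)⟫ := by
        rw [← integral_add (hintsupε v hv) (hintsupε (-v) hvn)]
        refine integral_nonneg fun ω => ?_
        have h1 : ⟪v, ρ 1 (ε ω)⟫ ≤ ⨆ g : G, ⟪v, ρ g (ε ω)⟫ :=
          le_ciSup (auxBdd ρ v (ε ω)) 1
        have h2 : ⟪-v, ρ 1 (ε ω)⟫ ≤ ⨆ g : G, ⟪-v, ρ g (ε ω)⟫ :=
          le_ciSup (auxBdd ρ (-v) (ε ω)) 1
        rw [inner_neg_left] at h2
        simp only [Pi.zero_apply, Pi.add_apply]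
        linarith
      have := hKge v hv
      have := hKge (-v) hvn
      linarith
    by_cases hm : mstar = 0
    · rw [hm, norm_zero]
      constructor
      · -- σK ≤ ‖t₀‖
        have hJY0 : ∀ v : M, ‖v‖ = 1 → (∫ ω, ⨆ g : G, ⟪v, ρ g (Y ω)⟫) ≤ 0 := by
          intro v hv
          by_contra h
          push_neg at h
          have h1 := hmin ((∫ ω, ⨆ g : G, ⟪v, ρ g (Y ω)⟫) • v)
          rw [hFr v hv _ h.le, hm, hF0] at h1
          nlinarith
        have hJε : ∀ v : {v : M // ‖v‖ = 1},
            (∫ ω, ⨆ g : G, ⟪v.1, ρ g (ε ω)⟫) ≤ ‖t₀‖ / σ := by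
          rintro ⟨v, hv⟩
          have h1 := hlb v hv
          have h2 := hJY0 v hv
          rw [le_div_iff₀ hσ]
          nlinarith
        have hKle : K ≤ ‖t₀‖ / σ := by
          rw [hK]; exact ciSup_le hJε
        have := mul_le_mul_of_nonneg_left hKle hσ.le
        rw [mul_div_cancel₀ _ (ne_of_gt hσ)] at this
        linarith
      · nlinarith [norm_nonneg t₀, mul_nonneg hσ.le hK0]
    · -- mstar ≠ 0
      have hS : 0 < ‖mstar‖ := norm_pos_iff.mpr hm
      set S := ‖mstar‖ with hSdef
      set vs := S⁻¹ • mstar with hvsdef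
      have hvs : ‖vs‖ = 1 := norm_smul_inv_norm hm
      have hms : mstar = S • vs := by
        rw [hvsdef, smul_smul, mul_inv_cancel₀ (ne_of_gt hS), one_smul]
      set J := ∫ ω, ⨆ g : G, ⟪vs, ρ g (Y ω)⟫ with hJdef
      have hFm : F mstar = S ^ 2 + (∫ ω, ‖Y ω‖ ^ 2) - 2 * (S * J) := by
        conv_lhs => rw [hms]
        exact hFr vs hvs S hS.le
      have key : ∀ r : ℝ, 0 ≤ r → S ^ 2 - 2 * (S * J) ≤ r ^ 2 - 2 * (r * J) := by
        intro r hr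
        have h1 := hmin (r • vs)
        rw [hFr vs hvs r hr, hFm] at h1
        linarith
      have hJ0 : 0 ≤ J := by
        by_contra h
        push_neg at h
        have := key 0 le_rfl
        nlinarith
      have hSJ : S = J := by
        have h1 := key J hJ0
        have h2 : (S - J) ^ 2 ≤ 0 := by nlinarith
        have h3 : (S - J) ^ 2 = 0 := le_antisymm h2 (sq_nonneg _)
        have h4 : S - J = 0 := (pow_eq_zero_iff two_ne_zero).mp h3
        linarith
      constructor
      · -- lower bound
        have hdom : ∀ v : M, ‖v‖ = 1 → (∫ ω, ⨆ g : G, ⟪v, ρ g (Y ω)⟫) ≤ S := by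
          intro v hv
          by_contra h
          push_neg at h
          have hr0 : (0 : ℝ) ≤ ∫ ω, ⨆ g : G, ⟪v, ρ g (Y ω)⟫ := le_trans hS.le h.le
          have h1 := hmin ((∫ ω, ⨆ g : G, ⟪v, ρ g (Y ω)⟫) • v)
          rw [hFr v hv _ hr0, hFm] at h1
          nlinarith
        have hJεall : ∀ v : {v : M // ‖v‖ = 1},
            (∫ ω, ⨆ g : G, ⟪v.1, ρ g (ε ω)⟫) ≤ (S + ‖t₀‖) / σ := by
          rintro ⟨v, hv⟩
          have h1 := hlb v hv
          have h2 := hdom v hv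
          rw [le_div_iff₀ hσ]
          nlinarith
        have hKle : K ≤ (S + ‖t₀‖) / σ := by
          rw [hK]; exact ciSup_le hJεall
        have := mul_le_mul_of_nonneg_left hKle hσ.le
        rw [mul_div_cancel₀ _ (ne_of_gt hσ)] at this
        linarith
      · -- upper bound
        have h1 := hub vs hvs
        have h2 := hKge vs hvs
        nlinarith
  · -- sphere empty : M has no unit vector, so mstar = 0 and everything degenerate
    have hKz : K = 0 := by
      rw [hK]
      haveI : IsEmpty {v : M // ‖v‖ = 1} := not_nonempty_iff.mp hsph
      exact Real.iSup_of_isEmpty _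
    have hm : mstar = 0 := by
      by_contra h
      exact hsph ⟨⟨‖mstar‖⁻¹ • mstar, norm_smul_inv_norm h⟩⟩
    have ht : t₀ = 0 := by
      by_contra h
      exact hsph ⟨⟨‖t₀‖⁻¹ • t₀, norm_smul_inv_norm h⟩⟩
    rw [hKz, hm, ht]
    simp


/-- In the generative model `Y = Φ·t₀ + σε` with an isometric linear group
action, any minimizer `m⋆` of the variance `F` in the quotient space satisfies
`σK - ‖t₀‖ ≤ ‖m⋆‖ ≤ σK + ‖t₀‖`, where `K = sup_{‖v‖=1} E(sup_g ⟪v, g·ε⟫)`. -/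
theorem stmt6 {M : Type*} [NormedAddCommGroup M] [InnerProductSpace ℝ M]
    [MeasurableSpace M] [BorelSpace M]
    {G : Type*} [Group G] [MeasurableSpace G] (ρ : G →* (M →ₗᵢ[ℝ] M))
    {Ω : Type*} [MeasureSpace Ω] [IsProbabilityMeasure (ℙ : Measure Ω)]
    (t₀ : M) (σ : ℝ) (hσ : 0 < σ)
    (Φ : Ω → G) (ε : Ω → M) (hindep : IndepFun Φ ε)
    (hmeas : AEStronglyMeasurable ε ℙ)
    (hint : Integrable ε) (hmean : (∫ ω, ε ω) = 0)
    (hvar : (∫ ω, ‖ε ω‖ ^ 2) = 1)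
    (hY2 : Integrable (fun ω => ‖ρ (Φ ω) t₀ + σ • ε ω‖ ^ 2))
    (hintsupε : ∀ v : M, ‖v‖ = 1 → Integrable (fun ω => ⨆ g : G, ⟪v, ρ g (ε ω)⟫))
    (hintsupY : ∀ v : M, ‖v‖ = 1 →
      Integrable (fun ω => ⨆ g : G, ⟪v, ρ g (ρ (Φ ω) t₀ + σ • ε ω)⟫))
    (F : M → ℝ)
    (hF : ∀ x, F x = ∫ ω, ⨅ g : G, ‖x - ρ g (ρ (Φ ω) t₀ + σ • ε ω)‖ ^ 2)
    (hFint : ∀ x, Integrable (fun ω => ⨅ g : G, ‖x - ρ g (ρ (Φ ω) t₀ + σ • ε ω)‖ ^ 2))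
    (K : ℝ) (hK : K = ⨆ v : {v : M // ‖v‖ = 1}, ∫ ω, ⨆ g : G, ⟪v.1, ρ g (ε ω)⟫)
    (mstar : M) (hmin : ∀ x, F mstar ≤ F x) :
    σ * K - ‖t₀‖ ≤ ‖mstar‖ ∧ ‖mstar‖ ≤ σ * K + ‖t₀‖ := by
  exact stmt6_aux ρ t₀ σ hσ Φ ε (fun ω => ρ (Φ ω) t₀ + σ • ε ω) (fun ω => rfl)
    hint hY2 hintsupε hintsupY F hF K hK mstar hmin
end

section
/- Under the same generative model Y = Φ·t₀ + σε with an isometric linear action, if the support of ε is not contained in the fixed points and a Fréchet mean [m⋆] of [Y] exists (i.e., m⋆ minimizes F), then the consistency bias CB = inf_{g∈G} ‖t₀ − g·m⋆‖ satisfies σK − 2‖t₀‖ ≤ CB ≤ σK + 2‖t₀‖; consequently CB = σK + o(σ) as σ → ∞. -/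
open MeasureTheory ProbabilityTheory RealInnerProductSpace Filter Asymptotics Set

section myhelpers

variable {ι : Type*} [Nonempty ι]

private lemma my_iInf_const_sub (c : ℝ) (f : ι → ℝ) (hf : BddAbove (range f)) :
    ⨅ i, (c - 2 * f i) = c - 2 * ⨆ i, f i := by
  refine IsGLB.ciInf_eq ?_
  constructor
  · rintro x ⟨i, rfl⟩
    have : f i ≤ ⨆ i, f i := le_ciSup hf i
    dsimp only
    linarith
  · intro b hb
    have h1 : ∀ i, f i ≤ (c - b) / 2 := by
      intro i
      have := hb ⟨i, rfl⟩
      dsimp at this; linarith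
    have h2 : (⨆ i, f i) ≤ (c - b) / 2 := ciSup_le h1
    linarith

private lemma my_sup_shift {a b : ι → ℝ} {C : ℝ} (hb : BddAbove (range b))
    (ha : ∀ i, |a i| ≤ C) :
    |(⨆ i, (a i + b i)) - ⨆ i, b i| ≤ C := by
  have hab : BddAbove (range fun i => a i + b i) := by
    obtain ⟨B, hB⟩ := hb
    refine ⟨C + B, ?_⟩
    rintro x ⟨i, rfl⟩
    have h1 := (abs_le.mp (ha i)).2
    have h2 := hB ⟨i, rfl⟩
    dsimp at *; linarith
  rw [abs_le]
  constructor
  · have h1 : (⨆ i, b i) ≤ (⨆ i, (a i + b i)) + C := by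
      refine ciSup_le fun i => ?_
      have h2 : a i + b i ≤ ⨆ i, (a i + b i) := le_ciSup hab i
      have := (abs_le.mp (ha i)).1
      linarith
    linarith
  · have h1 : (⨆ i, (a i + b i)) ≤ C + ⨆ i, b i := by
      refine ciSup_le fun i => ?_
      have h2 : b i ≤ ⨆ i, b i := le_ciSup hb i
      have := (abs_le.mp (ha i)).2
      linarith
    linarith

variable {M : Type*} [NormedAddCommGroup M] [InnerProductSpace ℝ M]
  {G : Type*} [Group G] (ρ : G →* (M →ₗᵢ[ℝ] M))

private lemma my_unit_norm {M : Type*} [NormedAddCommGroup M] [InnerProductSpace ℝ M]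
    {x : M} (hx : x ≠ 0) : ‖(‖x‖⁻¹ • x : M)‖ = 1 := by
  rw [norm_smul, norm_inv, norm_norm, inv_mul_cancel₀ (norm_ne_zero_iff.mpr hx)]

private lemma my_inner_bdd (v w : M) :
    BddAbove (range fun g : G => ⟪v, ρ g w⟫) := by
  refine ⟨‖v‖ * ‖w‖, ?_⟩
  rintro x ⟨g, rfl⟩
  have h1 : ⟪v, ρ g w⟫ ≤ ‖v‖ * ‖ρ g w‖ := real_inner_le_norm _ _
  rwa [(ρ g).norm_map] at h1

private lemma my_identity (x y : M) :
    ⨅ g : G, ‖x - ρ g y‖ ^ 2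
      = (‖x‖ ^ 2 + ‖y‖ ^ 2) - 2 * ⨆ g : G, ⟪x, ρ g y⟫ := by
  have h : ∀ g : G, ‖x - ρ g y‖ ^ 2 = (‖x‖ ^ 2 + ‖y‖ ^ 2) - 2 * ⟪x, ρ g y⟫ := by
    intro g
    have h2 := norm_sub_sq_real x (ρ g y)
    rw [(ρ g).norm_map] at h2
    linarith
  simp_rw [h]
  exact my_iInf_const_sub _ _ (my_inner_bdd ρ x y)

private lemma my_sup_smul (v y : M) {r : ℝ} (hr : 0 ≤ r) :
    (⨆ g : G, ⟪r • v, ρ g y⟫) = r * ⨆ g : G, ⟪v, ρ g y⟫ := by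
  simp_rw [real_inner_smul_left]
  exact (Real.mul_iSup_of_nonneg hr _).symm

private lemma my_sup_abs_le {v : M} (hv : ‖v‖ = 1) (w : M) :
    |⨆ g : G, ⟪v, ρ g w⟫| ≤ ‖w‖ := by
  rw [abs_le]
  constructor
  · have h1 : ⟪v, ρ (1 : G) w⟫ ≤ ⨆ g : G, ⟪v, ρ g w⟫ :=
      le_ciSup (my_inner_bdd ρ v w) 1
    have h2 : |⟪v, (w : M)⟫| ≤ ‖v‖ * ‖w‖ := abs_real_inner_le_norm _ _
    rw [hv, one_mul] at h2
    simp only [map_one, LinearIsometry.coe_one, id_eq] at h1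
    have := (abs_le.mp h2).1
    linarith
  · refine ciSup_le fun g => ?_
    have h1 : ⟪v, ρ g w⟫ ≤ ‖v‖ * ‖ρ g w‖ := real_inner_le_norm _ _
    rwa [(ρ g).norm_map, hv, one_mul] at h1

private lemma my_decomp {v : M} (hv : ‖v‖ = 1) (a e : M) {σ : ℝ} (hσ : 0 ≤ σ) :
    |(⨆ g : G, ⟪v, ρ g (a + σ • e)⟫) - σ * ⨆ g : G, ⟪v, ρ g e⟫| ≤ ‖a‖ := by
  have h1 : ∀ g : G, ⟪v, ρ g (a + σ • e)⟫ = ⟪v, ρ g a⟫ + σ * ⟪v, ρ g e⟫ := by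
    intro g
    rw [map_add, LinearIsometry.map_smul, inner_add_right, real_inner_smul_right]
  rw [show (σ * ⨆ g : G, ⟪v, ρ g e⟫) = ⨆ g : G, σ * ⟪v, ρ g e⟫ from
    Real.mul_iSup_of_nonneg hσ _]
  simp_rw [h1]
  refine my_sup_shift ?_ ?_
  · obtain ⟨B, hB⟩ := my_inner_bdd ρ v e
    refine ⟨σ * B, ?_⟩
    rintro x ⟨g, rfl⟩
    exact mul_le_mul_of_nonneg_left (hB ⟨g, rfl⟩) hσ
  · intro g
    have h2 : |⟪v, ρ g a⟫| ≤ ‖v‖ * ‖ρ g a‖ := abs_real_inner_le_norm _ _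
    rwa [(ρ g).norm_map, hv, one_mul] at h2

end myhelpers

/-- In the generative model `Y = Φ·t₀ + σε` with an isometric linear group
action, if for each noise level `σ > 0` a Fréchet mean `m⋆(σ)` of `[Y]` exists,
then the consistency bias `CB(σ) = inf_g ‖t₀ - g·m⋆(σ)‖` satisfies
`σK - 2‖t₀‖ ≤ CB(σ) ≤ σK + 2‖t₀‖`; consequently `CB(σ) = σK + o(σ)` as
`σ → ∞`. -/
theorem stmt7 {M : Type*} [NormedAddCommGroup M] [InnerProductSpace ℝ M]
    [MeasurableSpace M] [BorelSpace M]
    {G : Type*} [Group G] [MeasurableSpace G] (ρ : G →* (M →ₗᵢ[ℝ] M))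
    {Ω : Type*} [MeasureSpace Ω] [IsProbabilityMeasure (ℙ : Measure Ω)]
    (t₀ : M) (Φ : Ω → G) (ε : Ω → M) (hindep : IndepFun Φ ε)
    (hmeas : AEStronglyMeasurable ε ℙ)
    (hint : Integrable ε) (hmean : (∫ ω, ε ω) = 0)
    (hvar : (∫ ω, ‖ε ω‖ ^ 2) = 1)
    (hsupp : ∃ x : M, (∀ r > 0, 0 < ℙ (ε ⁻¹' Metric.ball x r)) ∧ ∃ g : G, ρ g x ≠ x)
    (hY2 : ∀ σ : ℝ, Integrable (fun ω => ‖ρ (Φ ω) t₀ + σ • ε ω‖ ^ 2))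
    (hintsupε : ∀ v : M, ‖v‖ = 1 → Integrable (fun ω => ⨆ g : G, ⟪v, ρ g (ε ω)⟫))
    (hintsupY : ∀ σ : ℝ, ∀ v : M, ‖v‖ = 1 →
      Integrable (fun ω => ⨆ g : G, ⟪v, ρ g (ρ (Φ ω) t₀ + σ • ε ω)⟫))
    (F : ℝ → M → ℝ)
    (hF : ∀ σ x, F σ x = ∫ ω, ⨅ g : G, ‖x - ρ g (ρ (Φ ω) t₀ + σ • ε ω)‖ ^ 2)
    (hFint : ∀ (σ : ℝ) (x : M), Integrable (fun ω => ⨅ g : G, ‖x - ρ g (ρ (Φ ω) t₀ + σ • ε ω)‖ ^ 2))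
    (K : ℝ) (hK : K = ⨆ v : {v : M // ‖v‖ = 1}, ∫ ω, ⨆ g : G, ⟪v.1, ρ g (ε ω)⟫)
    (mstar : ℝ → M) (hmin : ∀ σ > (0 : ℝ), ∀ x, F σ (mstar σ) ≤ F σ x)
    (CB : ℝ → ℝ) (hCB : ∀ σ, CB σ = ⨅ g : G, ‖t₀ - ρ g (mstar σ)‖) :
    (∀ σ > (0 : ℝ), σ * K - 2 * ‖t₀‖ ≤ CB σ ∧ CB σ ≤ σ * K + 2 * ‖t₀‖) ∧
      (fun σ => CB σ - σ * K) =o[atTop] (fun σ : ℝ => σ) := by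
  -- a unit vector exists
  have hunit : ∃ u : M, ‖u‖ = 1 := by
    by_contra h
    push_neg at h
    have hz : ∀ x : M, x = 0 := by
      intro x
      by_contra hx
      exact h _ (my_unit_norm hx)
    have h0 : (∫ ω, ‖ε ω‖ ^ 2) = (0 : ℝ) := by
      have : (fun ω => ‖ε ω‖ ^ 2) = fun _ => (0 : ℝ) := by
        funext ω; rw [hz (ε ω)]; simp
      rw [this, integral_zero]
    rw [hvar] at h0
    norm_num at h0
  obtain ⟨u, hu⟩ := hunit
  haveI : Nonempty {v : M // ‖v‖ = 1} := ⟨⟨u, hu⟩⟩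
  -- κ and its bounds
  set κ : M → ℝ := fun v => ∫ ω, ⨆ g : G, ⟪v, ρ g (ε ω)⟫ with hκdef
  have hκle : ∀ v : M, ‖v‖ = 1 → κ v ≤ ∫ ω, ‖ε ω‖ := by
    intro v hv
    refine integral_mono (hintsupε v hv) hint.norm fun ω => ?_
    exact le_trans (le_abs_self _) (my_sup_abs_le ρ hv (ε ω))
  have hbddκ : BddAbove (range fun v : {v : M // ‖v‖ = 1} => κ v.1) := by
    refine ⟨∫ ω, ‖ε ω‖, ?_⟩
    rintro x ⟨v, rfl⟩
    exact hκle v.1 v.2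
  have part1 : ∀ σ > (0 : ℝ), σ * K - 2 * ‖t₀‖ ≤ CB σ ∧ CB σ ≤ σ * K + 2 * ‖t₀‖ := by
    intro σ hσ
    set lam : M → ℝ :=
      fun v => ∫ ω, ⨆ g : G, ⟪v, ρ g (ρ (Φ ω) t₀ + σ • ε ω)⟫ with hlamdef
    set A : ℝ := ∫ ω, ‖ρ (Φ ω) t₀ + σ • ε ω‖ ^ 2 with hAdef
    -- expansion of F on rays
    have hexp : ∀ v : M, ‖v‖ = 1 → ∀ r : ℝ, 0 ≤ r →
        F σ (r • v) = r ^ 2 - 2 * (r * lam v) + A := by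
      intro v hv r hr
      rw [hF]
      have hident : ∀ ω,
          (⨅ g : G, ‖r • v - ρ g (ρ (Φ ω) t₀ + σ • ε ω)‖ ^ 2)
            = r ^ 2 + ‖ρ (Φ ω) t₀ + σ • ε ω‖ ^ 2
              - 2 * r * (⨆ g : G, ⟪v, ρ g (ρ (Φ ω) t₀ + σ • ε ω)⟫) := by
        intro ω
        rw [my_identity ρ, my_sup_smul ρ _ _ hr, norm_smul, hv]
        have : ‖r‖ = r := by rw [Real.norm_eq_abs, abs_of_nonneg hr]
        rw [this]
        ring
      simp_rw [hident]
      have hifun : Integrable (fun ω => r ^ 2 + ‖ρ (Φ ω) t₀ + σ • ε ω‖ ^ 2) :=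
        (integrable_const (r ^ 2)).add (hY2 σ)
      have hifun2 : Integrable
          (fun ω => 2 * r * ⨆ g : G, ⟪v, ρ g (ρ (Φ ω) t₀ + σ • ε ω)⟫) :=
        (hintsupY σ v hv).const_mul (2 * r)
      have e1 : ∫ ω, (r ^ 2 + ‖ρ (Φ ω) t₀ + σ • ε ω‖ ^ 2
            - 2 * r * ⨆ g : G, ⟪v, ρ g (ρ (Φ ω) t₀ + σ • ε ω)⟫)
          = (∫ ω, (r ^ 2 + ‖ρ (Φ ω) t₀ + σ • ε ω‖ ^ 2))
            - ∫ ω, 2 * r * ⨆ g : G, ⟪v, ρ g (ρ (Φ ω) t₀ + σ • ε ω)⟫ :=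
        integral_sub hifun hifun2
      have e2 : (∫ ω, (r ^ 2 + ‖ρ (Φ ω) t₀ + σ • ε ω‖ ^ 2)) = r ^ 2 + A := by
        rw [integral_add (integrable_const (r ^ 2)) (hY2 σ), integral_const]
        simp [measure_univ]
        rfl
      have e3 : (∫ ω, 2 * r * ⨆ g : G, ⟪v, ρ g (ρ (Φ ω) t₀ + σ • ε ω)⟫)
          = 2 * r * lam v := integral_const_mul _ _
      rw [e1, e2, e3]
      ring
    -- pointwise comparison of sups
    have hpt : ∀ v : M, ‖v‖ = 1 → ∀ ω,
        |(⨆ g : G, ⟪v, ρ g (ρ (Φ ω) t₀ + σ • ε ω)⟫)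
          - σ * ⨆ g : G, ⟪v, ρ g (ε ω)⟫| ≤ ‖t₀‖ := by
      intro v hv ω
      have h := my_decomp ρ hv (ρ (Φ ω) t₀) (ε ω) hσ.le
      rwa [(ρ (Φ ω)).norm_map] at h
    -- lam vs κ
    have hlamκ : ∀ v : M, ‖v‖ = 1 → |lam v - σ * κ v| ≤ ‖t₀‖ := by
      intro v hv
      have hi1 := hintsupY σ v hv
      have hi2 := (hintsupε v hv).const_mul σ
      have heq : lam v - σ * κ v
          = ∫ ω, ((⨆ g : G, ⟪v, ρ g (ρ (Φ ω) t₀ + σ • ε ω)⟫)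
              - σ * ⨆ g : G, ⟪v, ρ g (ε ω)⟫) := by
        rw [integral_sub hi1 hi2]
        have e3 : (∫ ω, σ * ⨆ g : G, ⟪v, ρ g (ε ω)⟫) = σ * κ v :=
          integral_const_mul _ _
        rw [e3]
      rw [heq]
      calc |∫ ω, ((⨆ g : G, ⟪v, ρ g (ρ (Φ ω) t₀ + σ • ε ω)⟫)
              - σ * ⨆ g : G, ⟪v, ρ g (ε ω)⟫)|
          ≤ ∫ ω, |(⨆ g : G, ⟪v, ρ g (ρ (Φ ω) t₀ + σ • ε ω)⟫)
              - σ * ⨆ g : G, ⟪v, ρ g (ε ω)⟫| := by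
              rw [← Real.norm_eq_abs]
              refine le_trans (norm_integral_le_integral_norm _) ?_
              simp [Real.norm_eq_abs]
        _ ≤ ∫ _ω, ‖t₀‖ := integral_mono (hi1.sub hi2).abs (integrable_const _)
              fun ω => hpt v hv ω
        _ = ‖t₀‖ := by simp [measure_univ]
    -- bounded above
    have hbddlam : BddAbove (range fun v : {v : M // ‖v‖ = 1} => lam v.1) := by
      refine ⟨σ * (∫ ω, ‖ε ω‖) + ‖t₀‖, ?_⟩
      rintro x ⟨v, rfl⟩
      have h1 := (abs_le.mp (hlamκ v.1 v.2)).2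
      have h2 := hκle v.1 v.2
      have h3 : σ * κ v.1 ≤ σ * ∫ ω, ‖ε ω‖ := mul_le_mul_of_nonneg_left h2 hσ.le
      dsimp only
      linarith
    set Λ : ℝ := ⨆ v : {v : M // ‖v‖ = 1}, lam v.1 with hΛdef
    -- Λ nonneg
    have hΛ0 : 0 ≤ Λ := by
      have hkey : ∀ ω, 0 ≤ (⨆ g : G, ⟪u, ρ g (ρ (Φ ω) t₀ + σ • ε ω)⟫)
          + (⨆ g : G, ⟪-u, ρ g (ρ (Φ ω) t₀ + σ • ε ω)⟫) := by
        intro ω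
        have h1 : ⟪u, ρ (1 : G) (ρ (Φ ω) t₀ + σ • ε ω)⟫
            ≤ ⨆ g : G, ⟪u, ρ g (ρ (Φ ω) t₀ + σ • ε ω)⟫ :=
          le_ciSup (my_inner_bdd ρ u _) 1
        have h2 : ⟪-u, ρ (1 : G) (ρ (Φ ω) t₀ + σ • ε ω)⟫
            ≤ ⨆ g : G, ⟪-u, ρ g (ρ (Φ ω) t₀ + σ • ε ω)⟫ :=
          le_ciSup (my_inner_bdd ρ (-u) _) 1
        rw [inner_neg_left] at h2
        linarith
      have hmu : ‖(-u : M)‖ = 1 := by rw [norm_neg, hu]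
      have hsum : 0 ≤ lam u + lam (-u) := by
        rw [hlamdef]
        dsimp only
        rw [← integral_add (hintsupY σ u hu) (hintsupY σ (-u) hmu)]
        exact integral_nonneg hkey
      have h1 : lam u ≤ Λ := le_ciSup hbddlam ⟨u, hu⟩
      have h2 : lam (-u) ≤ Λ := le_ciSup hbddlam ⟨-u, hmu⟩
      linarith
    -- |Λ - σK| ≤ ‖t₀‖
    have hΛK : |Λ - σ * K| ≤ ‖t₀‖ := by
      rw [abs_le]
      constructor
      · -- σK ≤ Λ + ‖t₀‖
        have hKle : K ≤ (Λ + ‖t₀‖) / σ := by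
          rw [hK]
          refine ciSup_le fun v => ?_
          have h1 := (abs_le.mp (hlamκ v.1 v.2)).1
          have h2 : lam v.1 ≤ Λ := le_ciSup hbddlam v
          rw [le_div_iff₀ hσ]
          have : (∫ ω, ⨆ g : G, ⟪v.1, ρ g (ε ω)⟫) = κ v.1 := rfl
          rw [this]
          nlinarith
        have := mul_le_mul_of_nonneg_left hKle hσ.le
        rw [mul_div_cancel₀ _ (ne_of_gt hσ)] at this
        linarith
      · -- Λ ≤ σK + ‖t₀‖
        have hΛle : Λ ≤ σ * K + ‖t₀‖ := by
          refine ciSup_le fun v => ?_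
          have h1 := (abs_le.mp (hlamκ v.1 v.2)).2
          have h2 : κ v.1 ≤ K := by
            rw [hK]
            exact le_ciSup hbddκ v
          have h3 : σ * κ v.1 ≤ σ * K := mul_le_mul_of_nonneg_left h2 hσ.le
          linarith
        linarith
    -- norm of the minimizer
    have hm : ‖mstar σ‖ = Λ := by
      rcases eq_or_ne (mstar σ) 0 with h0 | h0
      · -- minimizer is 0 : Λ = 0
        have hF0 : F σ (mstar σ) = A := by
          rw [h0]
          have := hexp u hu 0 le_rfl
          simpa using this
        have hlamle : ∀ v : {v : M // ‖v‖ = 1}, lam v.1 ≤ 0 := by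
          intro v
          by_contra hneg
          push_neg at hneg
          have h1 := hmin σ hσ (lam v.1 • v.1)
          rw [hF0, hexp v.1 v.2 (lam v.1) hneg.le] at h1
          nlinarith
        have hΛle : Λ ≤ 0 := ciSup_le hlamle
        rw [h0, norm_zero]
        linarith
      · have hn : 0 < ‖mstar σ‖ := norm_pos_iff.mpr h0
        set n : ℝ := ‖mstar σ‖ with hndef
        have hvm : ‖(‖mstar σ‖⁻¹ • mstar σ : M)‖ = 1 := my_unit_norm h0
        set vm : M := ‖mstar σ‖⁻¹ • mstar σ with hvmdef
        have hmeq : mstar σ = n • vm := by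
          rw [hvmdef, hndef, smul_smul, mul_inv_cancel₀ (ne_of_gt hn), one_smul]
        have hFm : F σ (mstar σ) = n ^ 2 - 2 * (n * lam vm) + A := by
          rw [hmeq]
          exact hexp vm hvm n hn.le
        -- vm achieves the sup
        have hmax : ∀ v : {v : M // ‖v‖ = 1}, lam v.1 ≤ lam vm := by
          intro v
          have h1 := hmin σ hσ (n • v.1)
          rw [hFm, hexp v.1 v.2 n hn.le] at h1
          nlinarith
        have hlamvm : lam vm = Λ :=
          le_antisymm (le_ciSup hbddlam ⟨vm, hvm⟩) (ciSup_le hmax)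
        -- compare with Λ • vm
        have h2 := hmin σ hσ (Λ • vm)
        rw [hFm, hexp vm hvm Λ hΛ0, hlamvm] at h2
        nlinarith
    -- bounds on CB
    have hlow : ∀ g : G, ‖mstar σ‖ - ‖t₀‖ ≤ ‖t₀ - ρ g (mstar σ)‖ := by
      intro g
      have h1 : ‖ρ g (mstar σ)‖ - ‖t₀‖ ≤ ‖ρ g (mstar σ) - t₀‖ := norm_sub_norm_le _ _
      rw [norm_sub_rev, (ρ g).norm_map] at h1
      exact h1
    have hCBlow : ‖mstar σ‖ - ‖t₀‖ ≤ CB σ := by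
      rw [hCB]
      exact le_ciInf hlow
    have hCBup : CB σ ≤ ‖t₀‖ + ‖mstar σ‖ := by
      rw [hCB]
      have hb : BddBelow (range fun g : G => ‖t₀ - ρ g (mstar σ)‖) := by
        refine ⟨‖mstar σ‖ - ‖t₀‖, ?_⟩
        rintro x ⟨g, rfl⟩
        exact hlow g
      refine le_trans (ciInf_le hb 1) ?_
      simp only [map_one, LinearIsometry.coe_one, id_eq]
      exact norm_sub_le _ _
    obtain ⟨hK1, hK2⟩ := abs_le.mp hΛK
    constructor
    · rw [hm] at hCBlow
      linarith
    · rw [hm] at hCBup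
      linarith
  refine ⟨part1, ?_⟩
  rw [isLittleO_iff]
  intro c hc
  filter_upwards [eventually_ge_atTop (max 1 (2 * ‖t₀‖ / c))] with σ hσ'
  have h1 : (1 : ℝ) ≤ σ := le_trans (le_max_left _ _) hσ'
  have hσpos : 0 < σ := by linarith
  obtain ⟨hl, hr⟩ := part1 σ hσpos
  have habs : |CB σ - σ * K| ≤ 2 * ‖t₀‖ := abs_le.mpr ⟨by linarith, by linarith⟩
  have h2 : 2 * ‖t₀‖ / c ≤ σ := le_trans (le_max_right _ _) hσ'
  have h3 : 2 * ‖t₀‖ ≤ c * σ := by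
    rw [div_le_iff₀ hc] at h2
    nlinarith
  calc ‖CB σ - σ * K‖ = |CB σ - σ * K| := Real.norm_eq_abs _
    _ ≤ 2 * ‖t₀‖ := habs
    _ ≤ c * σ := h3
    _ = c * ‖σ‖ := by rw [Real.norm_eq_abs, abs_of_pos hσpos]
end

section
/- In the isometric setting with Y = Φ·t₀ + σε, the function λ(v) = E(sup_{g∈G} ⟨v, g·Y⟩) satisfies sup_{‖v‖=1} λ(v) ≥ 0; moreover, if m⋆ and n⋆ are representatives of any two (possibly distinct) Fréchet means of [Y], then ‖m⋆‖ = ‖n⋆‖ = sup_{‖v‖=1} λ(v). -/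
open MeasureTheory ProbabilityTheory RealInnerProductSpace

private lemma ciInf_sub_two_mul {ι : Type*} [Nonempty ι] (c : ℝ) (f : ι → ℝ)
    (hb : BddAbove (Set.range f)) :
    (⨅ i, (c - 2 * f i)) = c - 2 * ⨆ i, f i := by
  obtain ⟨B, hB⟩ := hb
  have hBf : ∀ i, f i ≤ B := fun i => hB (Set.mem_range_self i)
  have hbb : BddBelow (Set.range fun i => c - 2 * f i) :=
    ⟨c - 2 * B, by rintro x ⟨i, rfl⟩; have := hBf i; simp only; linarith⟩
  apply le_antisymm
  · have h1 : ∀ i, f i ≤ (c - ⨅ i, (c - 2 * f i)) / 2 := fun i => by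
      have := ciInf_le hbb i; linarith
    have h2 := ciSup_le h1
    linarith
  · refine le_ciInf fun i => ?_
    have := le_ciSup ⟨B, hB⟩ i
    linarith

/-- In the isometric setting with `Y = Φ·t₀ + σε`, the quantity
`Λ = sup_{‖v‖=1} λ(v)` with `λ(v) = E(sup_g ⟪v, g·Y⟫)` is nonnegative, and any
representative of a Fréchet mean of `[Y]` has norm `Λ`; in particular all
Fréchet means have representatives of the same norm. -/
theorem stmt9 {M : Type*} [NormedAddCommGroup M] [InnerProductSpace ℝ M]
    [MeasurableSpace M] [BorelSpace M]
    {G : Type*} [Group G] [MeasurableSpace G] (ρ : G →* (M →ₗᵢ[ℝ] M))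
    {Ω : Type*} [MeasureSpace Ω] [IsProbabilityMeasure (ℙ : Measure Ω)]
    (t₀ : M) (σ : ℝ) (Φ : Ω → G) (ε : Ω → M) (hindep : IndepFun Φ ε)
    (hint : Integrable ε) (hmean : (∫ ω, ε ω) = 0)
    (hΦint : Integrable (fun ω => ρ (Φ ω) t₀))
    (hY2 : Integrable (fun ω => ‖ρ (Φ ω) t₀ + σ • ε ω‖ ^ 2))
    (hintsupY : ∀ v : M, ‖v‖ = 1 →
      Integrable (fun ω => ⨆ g : G, ⟪v, ρ g (ρ (Φ ω) t₀ + σ • ε ω)⟫))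
    (hFint : ∀ x : M,
      Integrable (fun ω => ⨅ g : G, ‖x - ρ g (ρ (Φ ω) t₀ + σ • ε ω)‖ ^ 2))
    (F : M → ℝ)
    (hF : ∀ x, F x = ∫ ω, ⨅ g : G, ‖x - ρ g (ρ (Φ ω) t₀ + σ • ε ω)‖ ^ 2)
    (Λ : ℝ)
    (hΛ : Λ = ⨆ v : {v : M // ‖v‖ = 1},
      ∫ ω, ⨆ g : G, ⟪v.1, ρ g (ρ (Φ ω) t₀ + σ • ε ω)⟫) :
    0 ≤ Λ ∧ ∀ mstar : M, (∀ x, F mstar ≤ F x) → ‖mstar‖ = Λ := by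
  haveI : Nonempty G := ⟨1⟩
  set Y : Ω → M := fun ω => ρ (Φ ω) t₀ + σ • ε ω with hYdef
  set lam : M → ℝ := fun x => ∫ ω, ⨆ g : G, ⟪x, ρ g (Y ω)⟫ with hlamdef
  have hΛ' : Λ = ⨆ v : {v : M // ‖v‖ = 1}, lam v.1 := hΛ
  have hunit : ∀ x : M, x ≠ 0 → ‖(‖x‖⁻¹ • x : M)‖ = 1 := by
    intro x hx
    rw [norm_smul, norm_inv, norm_norm, inv_mul_cancel₀ (norm_ne_zero_iff.mpr hx)]
  -- boundedness of the inner sup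
  have hbdd : ∀ (x : M) (ω : Ω), BddAbove (Set.range fun g : G => ⟪x, ρ g (Y ω)⟫) := by
    intro x ω
    refine ⟨‖x‖ * ‖Y ω‖, ?_⟩
    rintro r ⟨g, rfl⟩
    calc ⟪x, ρ g (Y ω)⟫ ≤ ‖x‖ * ‖ρ g (Y ω)‖ := real_inner_le_norm _ _
      _ = ‖x‖ * ‖Y ω‖ := by rw [(ρ g).norm_map]
  -- homogeneity of the inner sup
  have hscale : ∀ (c : ℝ), 0 ≤ c → ∀ (x : M) (ω : Ω),
      (⨆ g : G, ⟪c • x, ρ g (Y ω)⟫) = c * ⨆ g : G, ⟪x, ρ g (Y ω)⟫ := by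
    intro c hc x ω
    rw [Real.mul_iSup_of_nonneg hc]
    congr 1; funext g; rw [real_inner_smul_left]
  -- integrability of the sup integrand, all x
  have hsupint : ∀ x : M, Integrable (fun ω => ⨆ g : G, ⟪x, ρ g (Y ω)⟫) := by
    intro x
    rcases eq_or_ne x 0 with rfl | hx
    · have h0 : (fun ω => ⨆ g : G, ⟪(0 : M), ρ g (Y ω)⟫) = fun _ => (0 : ℝ) := by
        funext ω; simp [inner_zero_left, ciSup_const]
      rw [h0]; exact integrable_const 0
    · have h := (hintsupY _ (hunit x hx)).const_mul ‖x‖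
      refine h.congr (Filter.Eventually.of_forall fun ω => ?_)
      have := hscale ‖x‖ (norm_nonneg x) (‖x‖⁻¹ • x) ω
      rw [smul_smul, mul_inv_cancel₀ (norm_ne_zero_iff.mpr hx), one_smul] at this
      exact this.symm
  -- lam scales
  have hlam_smul : ∀ (c : ℝ), 0 ≤ c → ∀ x : M, lam (c • x) = c * lam x := by
    intro c hc x
    simp only [hlamdef]
    simp_rw [hscale c hc x]
    exact integral_const_mul _ _
  -- the key identity for F
  set C : ℝ := ∫ ω, ‖Y ω‖ ^ 2 with hCdef
  have hFid : ∀ x : M, F x = ‖x‖ ^ 2 + C - 2 * lam x := by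
    intro x
    rw [hF x]
    have hpt : ∀ ω, (⨅ g : G, ‖x - ρ g (Y ω)‖ ^ 2)
        = ‖x‖ ^ 2 + ‖Y ω‖ ^ 2 - 2 * ⨆ g : G, ⟪x, ρ g (Y ω)⟫ := by
      intro ω
      have hfun : (fun g : G => ‖x - ρ g (Y ω)‖ ^ 2)
          = fun g : G => (‖x‖ ^ 2 + ‖Y ω‖ ^ 2) - 2 * ⟪x, ρ g (Y ω)⟫ := by
        funext g
        rw [norm_sub_sq_real, (ρ g).norm_map]; ring
      rw [hfun, ciInf_sub_two_mul _ _ (hbdd x ω)]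
    refine (integral_congr_ae (Filter.Eventually.of_forall hpt)).trans ?_
    have hA : Integrable (fun ω => ‖x‖ ^ 2 + ‖Y ω‖ ^ 2) := by
      exact (integrable_const _).add hY2
    have hB : Integrable (fun ω => 2 * ⨆ g : G, ⟪x, ρ g (Y ω)⟫) := by
      exact (hsupint x).const_mul 2
    have hA' : Integrable (fun ω => ‖Y ω‖ ^ 2) := hY2
    rw [integral_sub hA hB, integral_add (integrable_const _) hA', integral_const,
      integral_const_mul]
    simp [hlamdef, hCdef]
  by_cases hex : ∃ v : M, ‖v‖ = 1
  · obtain ⟨v₀, hv₀⟩ := hex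
    haveI : Nonempty {v : M // ‖v‖ = 1} := ⟨⟨v₀, hv₀⟩⟩
    -- integrability of ‖Y‖
    have haesm : AEStronglyMeasurable (fun ω => ‖Y ω‖) ℙ := by
      have h := hY2.aestronglyMeasurable
      have heq : (fun ω => ‖Y ω‖) = fun ω => Real.sqrt (‖Y ω‖ ^ 2) := by
        funext ω; rw [Real.sqrt_sq (norm_nonneg _)]
      rw [heq]
      exact Real.continuous_sqrt.comp_aestronglyMeasurable h
    have hYnorm_int : Integrable (fun ω => ‖Y ω‖) := by
      have hg : Integrable (fun ω => 1 + ‖Y ω‖ ^ 2) := by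
        exact (integrable_const _).add hY2
      refine Integrable.mono' hg haesm
        (Filter.Eventually.of_forall fun ω => ?_)
      rw [Real.norm_eq_abs, abs_of_nonneg (norm_nonneg _)]
      nlinarith [sq_nonneg (‖Y ω‖ - 1)]
    -- lam is bounded on the sphere
    have hlam_le : ∀ v : {v : M // ‖v‖ = 1}, lam v.1 ≤ ∫ ω, ‖Y ω‖ := by
      intro v
      refine integral_mono (hsupint v.1) hYnorm_int fun ω => ?_
      refine ciSup_le fun g => ?_
      calc ⟪v.1, ρ g (Y ω)⟫ ≤ ‖v.1‖ * ‖ρ g (Y ω)‖ := real_inner_le_norm _ _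
        _ = ‖Y ω‖ := by rw [(ρ g).norm_map, v.2, one_mul]
    have hbddΛ : BddAbove (Set.range fun v : {v : M // ‖v‖ = 1} => lam v.1) :=
      ⟨_, by rintro r ⟨v, rfl⟩; exact hlam_le v⟩
    have hle : ∀ v : M, (h : ‖v‖ = 1) → lam v ≤ Λ := by
      intro v hv
      rw [hΛ']
      exact le_ciSup hbddΛ ⟨v, hv⟩
    -- nonnegativity of Λ
    have hpair : 0 ≤ lam v₀ + lam (-v₀) := by
      have := integral_add (hsupint v₀) (hsupint (-v₀))
      simp only [hlamdef]
      rw [← this]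
      refine integral_nonneg fun ω => ?_
      show (0 : ℝ) ≤ (⨆ g : G, ⟪v₀, ρ g (Y ω)⟫) + ⨆ g : G, ⟪-v₀, ρ g (Y ω)⟫
      have h1 : ⟪v₀, ρ 1 (Y ω)⟫ ≤ ⨆ g : G, ⟪v₀, ρ g (Y ω)⟫ := le_ciSup (hbdd v₀ ω) 1
      have h2 : ⟪-v₀, ρ 1 (Y ω)⟫ ≤ ⨆ g : G, ⟪-v₀, ρ g (Y ω)⟫ := le_ciSup (hbdd (-v₀) ω) 1
      rw [inner_neg_left] at h2
      linarith
    have hΛ0 : 0 ≤ Λ := by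
      by_contra h
      push_neg at h
      have a := lt_of_le_of_lt (hle v₀ hv₀) h
      have b := lt_of_le_of_lt (hle (-v₀) (by rw [norm_neg, hv₀])) h
      linarith
    refine ⟨hΛ0, fun mstar hmin => ?_⟩
    -- lam x ≤ ‖x‖ * Λ
    have hlam_le_Λ : ∀ x : M, lam x ≤ ‖x‖ * Λ := by
      intro x
      rcases eq_or_ne x 0 with rfl | hx
      · have : lam 0 = 0 := by simp [hlamdef, inner_zero_left, ciSup_const]
        rw [this, norm_zero, zero_mul]
      · have hx' : x = ‖x‖ • (‖x‖⁻¹ • x) := by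
          rw [smul_smul, mul_inv_cancel₀ (norm_ne_zero_iff.mpr hx), one_smul]
        calc lam x = ‖x‖ * lam (‖x‖⁻¹ • x) := by
              conv_lhs => rw [hx']
              exact hlam_smul ‖x‖ (norm_nonneg x) _
          _ ≤ ‖x‖ * Λ :=
            mul_le_mul_of_nonneg_left (hle _ (hunit x hx)) (norm_nonneg x)
    -- upper bound F mstar ≤ C - Λ²
    have hFm : F mstar ≤ C - Λ ^ 2 := by
      have h1 : ∀ v : {v : M // ‖v‖ = 1}, 2 * Λ * lam v.1 ≤ Λ ^ 2 + C - F mstar := by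
        intro v
        have h2 : F mstar ≤ F (Λ • v.1) := hmin _
        have h3 : F (Λ • v.1) = ‖Λ • v.1‖ ^ 2 + C - 2 * lam (Λ • v.1) := hFid _
        have h4 : lam (Λ • v.1) = Λ * lam v.1 := hlam_smul Λ hΛ0 _
        have h5 : ‖Λ • v.1‖ ^ 2 = Λ ^ 2 := by
          rw [norm_smul, v.2, mul_one, Real.norm_eq_abs, sq_abs]
        rw [h4, h5] at h3
        rw [h3] at h2
        linarith
      have h6 : (⨆ v : {v : M // ‖v‖ = 1}, 2 * Λ * lam v.1) ≤ Λ ^ 2 + C - F mstar :=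
        ciSup_le h1
      have h7 : (⨆ v : {v : M // ‖v‖ = 1}, 2 * Λ * lam v.1) = 2 * Λ * Λ := by
        rw [← Real.mul_iSup_of_nonneg (by linarith : (0:ℝ) ≤ 2 * Λ), ← hΛ']
      rw [h7] at h6
      nlinarith
    -- lower bound
    have h8 : ‖mstar‖ ^ 2 + C - 2 * (‖mstar‖ * Λ) ≤ F mstar := by
      rw [hFid]
      have := hlam_le_Λ mstar
      linarith
    have h9 : (‖mstar‖ - Λ) ^ 2 ≤ 0 := by nlinarith
    have h10 := sq_nonneg (‖mstar‖ - Λ)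
    have : (‖mstar‖ - Λ) ^ 2 = 0 := le_antisymm h9 h10
    have := (pow_eq_zero_iff two_ne_zero).mp this
    linarith [sub_eq_zero.mp this]
  · haveI : IsEmpty {v : M // ‖v‖ = 1} := ⟨fun v => hex ⟨v.1, v.2⟩⟩
    have hΛ0 : Λ = 0 := by rw [hΛ']; exact Real.iSup_of_isEmpty _
    have hzero : ∀ x : M, x = 0 := by
      intro x
      by_contra hx
      exact hex ⟨‖x‖⁻¹ • x, hunit x hx⟩
    exact ⟨by rw [hΛ0], fun mstar _ => by rw [hzero mstar, norm_zero, hΛ0]⟩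
end

section
/- If t₀ is a fixed point of the G-action (not necessarily isometric), the support of the standardized noise ε is not contained in the fixed points of a subgroup H ⊂ G acting isometrically, and Y = t₀ + σε, then t₀ does not minimize the pre-variance F(m) = E(inf_{g∈G} ‖g·m − Y‖²). -/
open MeasureTheory ProbabilityTheory RealInnerProductSpace

private lemma aux_iInf_const_sub {ι : Type*} [Nonempty ι] (f : ι → ℝ) (C K : ℝ) (hK : 0 ≤ K)
    (hb : BddAbove (Set.range f)) :
    (⨅ i, C - K * f i) = C - K * ⨆ i, f i := by
  have hanti : Antitone (fun x : ℝ => C - K * x) := fun a b hab => by dsimp only; nlinarith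
  have hcont : ContinuousAt (fun x : ℝ => C - K * x) (⨆ i, f i) := by fun_prop
  exact (hanti.map_ciSup_of_continuousAt hcont hb).symm

/-- Non-invariant case with an isometric subgroup: if `t₀` is a fixed point of
the (not necessarily isometric) action of `G`, `H ≤ G` acts by linear
isometries, and the support of the standardized noise `ε` is not contained in
the set of fixed points of `H`, then `t₀` does not minimize the pre-variance
`F(m) = E(inf_{g∈G} ‖g·m - Y‖²)` for `Y = t₀ + σε`. -/
theorem stmt11 {M : Type*} [NormedAddCommGroup M] [InnerProductSpace ℝ M]
    {G : Type*} [Group G] [MulAction G M] (H : Subgroup G)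
    (hlin : ∀ h ∈ H, IsLinearMap ℝ (fun m : M => h • m))
    (hiso : ∀ h ∈ H, ∀ m : M, ‖h • m‖ = ‖m‖)
    {Ω : Type*} [MeasureSpace Ω] [IsProbabilityMeasure (ℙ : Measure Ω)]
    (t₀ : M) (hfix : ∀ g : G, g • t₀ = t₀)
    (σ : ℝ) (hσ : 0 < σ) (ε : Ω → M)
    (hint : Integrable ε) (hmean : (∫ ω, ε ω) = 0)
    (hε2 : Integrable (fun ω => ‖ε ω‖ ^ 2)) (hvar : (∫ ω, ‖ε ω‖ ^ 2) = 1)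
    (hsupp : ∃ x : M, (∀ r > 0, 0 < ℙ (ε ⁻¹' Metric.ball x r)) ∧
      ∃ h ∈ H, h • x ≠ x)
    (hintsupH : ∀ v : M, ‖v‖ = 1 →
      Integrable (fun ω => ⨆ h : H, ⟪v, (h : G) • ε ω⟫))
    (hFint : ∀ m : M,
      Integrable (fun ω => ⨅ g : G, ‖g • m - (t₀ + σ • ε ω)‖ ^ 2))
    (hFHint : ∀ m : M,
      Integrable (fun ω => ⨅ h : H, ‖(h : G) • m - (t₀ + σ • ε ω)‖ ^ 2))
    (F : M → ℝ)
    (hF : ∀ m, F m = ∫ ω, ⨅ g : G, ‖g • m - (t₀ + σ • ε ω)‖ ^ 2) :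
    ¬ ∀ m, F t₀ ≤ F m := by
  intro hmin
  classical
  obtain ⟨x, hx, h₀, hh₀, hne⟩ := hsupp
  -- the action of elements of `H` preserves the inner product
  have hinner : ∀ h ∈ H, ∀ a b : M, ⟪h • a, h • b⟫ = ⟪a, b⟫ := by
    intro h hh a b
    exact LinearIsometry.inner_map_map
      ⟨IsLinearMap.mk' (fun m : M => h • m) (hlin h hh), hiso h hh⟩ a b
  have hadj : ∀ h ∈ H, ∀ a b : M, ⟪h • a, b⟫ = ⟪a, h⁻¹ • b⟫ := by
    intro h hh a b
    have := hinner h hh a (h⁻¹ • b)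
    rwa [smul_inv_smul] at this
  have hbdd : ∀ (v w : M), BddAbove (Set.range fun h : H => ⟪v, (h : G) • w⟫) := by
    intro v w
    refine ⟨‖v‖ * ‖w‖, ?_⟩
    rintro y ⟨h, rfl⟩
    calc ⟪v, (h : G) • w⟫ ≤ ‖v‖ * ‖(h : G) • w‖ := real_inner_le_norm _ _
      _ = ‖v‖ * ‖w‖ := by rw [hiso _ h.2]
  -- F is below the H-version
  have hF_le : ∀ m : M, F m ≤ ∫ ω, ⨅ h : H, ‖(h : G) • m - (t₀ + σ • ε ω)‖ ^ 2 := by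
    intro m
    rw [hF]
    refine integral_mono (hFint m) (hFHint m) fun ω => ?_
    refine le_ciInf fun h => ?_
    exact ciInf_le ⟨0, by rintro y ⟨g, rfl⟩; positivity⟩ ((h : G))
  -- value at t₀
  have hFt₀ : F t₀ = σ ^ 2 := by
    rw [hF]
    have hpt : ∀ ω, (⨅ g : G, ‖g • t₀ - (t₀ + σ • ε ω)‖ ^ 2) = σ ^ 2 * ‖ε ω‖ ^ 2 := by
      intro ω
      have h1 : (fun g : G => ‖g • t₀ - (t₀ + σ • ε ω)‖ ^ 2)
          = fun _ : G => σ ^ 2 * ‖ε ω‖ ^ 2 := by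
        funext g
        rw [hfix g]
        have h2 : t₀ - (t₀ + σ • ε ω) = -(σ • ε ω) := by abel
        rw [h2, norm_neg, norm_smul, mul_pow, Real.norm_eq_abs, sq_abs]
      rw [h1, ciInf_const]
    simp only [hpt]
    rw [integral_const_mul, hvar, mul_one]
  -- value of the H-version at t₀ + s • v
  have hFH_val : ∀ v : M, ‖v‖ = 1 → ∀ s : ℝ, 0 < s →
      (∫ ω, ⨅ h : H, ‖(h : G) • (t₀ + s • v) - (t₀ + σ • ε ω)‖ ^ 2)
        = s ^ 2 + σ ^ 2 - 2 * s * σ * ∫ ω, ⨆ h : H, ⟪v, (h : G) • ε ω⟫ := by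
    intro v hv s hs
    have hpt : ∀ ω, (⨅ h : H, ‖(h : G) • (t₀ + s • v) - (t₀ + σ • ε ω)‖ ^ 2)
        = (s ^ 2 + σ ^ 2 * ‖ε ω‖ ^ 2) - (2 * s * σ) * ⨆ h : H, ⟪v, (h : G) • ε ω⟫ := by
      intro ω
      have hterm : ∀ h : H, ‖(h : G) • (t₀ + s • v) - (t₀ + σ • ε ω)‖ ^ 2
          = (s ^ 2 + σ ^ 2 * ‖ε ω‖ ^ 2) - (2 * s * σ) * ⟪v, ((h : G))⁻¹ • ε ω⟫ := by
        intro h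
        have h1 : (h : G) • (t₀ + s • v) = t₀ + s • ((h : G) • v) := by
          rw [(hlin _ h.2).map_add, (hlin _ h.2).map_smul, hfix]
        have h2 : t₀ + s • ((h : G) • v) - (t₀ + σ • ε ω)
            = s • ((h : G) • v) - σ • ε ω := by abel
        rw [h1, h2, norm_sub_sq_real, real_inner_smul_left, real_inner_smul_right,
          norm_smul s, norm_smul σ, hiso _ h.2, hv, hadj _ h.2, Real.norm_eq_abs,
          Real.norm_eq_abs, abs_of_pos hs, abs_of_pos hσ]
        ring
      simp only [hterm]
      have hsurj : Function.Surjective (fun h : H => h⁻¹) := fun h => ⟨h⁻¹, inv_inv h⟩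
      have hre : (Set.range fun h : H =>
            (s ^ 2 + σ ^ 2 * ‖ε ω‖ ^ 2) - (2 * s * σ) * ⟪v, ((h : G))⁻¹ • ε ω⟫)
          = Set.range fun h : H =>
            (s ^ 2 + σ ^ 2 * ‖ε ω‖ ^ 2) - (2 * s * σ) * ⟪v, (h : G) • ε ω⟫ := by
        have := Function.Surjective.range_comp hsurj
          (fun h : H => (s ^ 2 + σ ^ 2 * ‖ε ω‖ ^ 2) - (2 * s * σ) * ⟪v, (h : G) • ε ω⟫)
        simpa [Function.comp_def] using this
      rw [iInf, hre, ← iInf]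
      exact aux_iInf_const_sub _ _ _ (by positivity) (hbdd v (ε ω))
    simp only [hpt]
    have hi1 : Integrable (fun ω => s ^ 2 + σ ^ 2 * ‖ε ω‖ ^ 2) :=
      (integrable_const _).add (hε2.const_mul _)
    have hi2 : Integrable (fun ω => (2 * s * σ) * ⨆ h : H, ⟪v, (h : G) • ε ω⟫) :=
      (hintsupH v hv).const_mul _
    rw [integral_sub hi1 hi2, integral_add (integrable_const _) (hε2.const_mul _),
      integral_const_mul, integral_const_mul, hvar, integral_const]
    simp [measure_univ]
  -- from minimality, all the suprema have nonpositive expectation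
  have hS_le : ∀ v : M, ‖v‖ = 1 → (∫ ω, ⨆ h : H, ⟪v, (h : G) • ε ω⟫) ≤ 0 := by
    intro v hv
    by_contra hc
    push_neg at hc
    set c := ∫ ω, ⨆ h : H, ⟪v, (h : G) • ε ω⟫ with hcdef
    have h1 := hmin (t₀ + (σ * c) • v)
    rw [hFt₀] at h1
    have h2 := hF_le (t₀ + (σ * c) • v)
    rw [hFH_val v hv (σ * c) (by positivity), ← hcdef] at h2
    nlinarith [h1.trans h2, mul_pos hσ hc]
  -- choose the direction `v`
  set d : ℝ := ‖h₀ • x - x‖ with hddef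
  have hd0 : 0 < d := norm_pos_iff.mpr (sub_ne_zero.mpr hne)
  set v : M := d⁻¹ • (h₀ • x - x) with hvdef
  have hv1 : ‖v‖ = 1 := by
    rw [hvdef, norm_smul, Real.norm_eq_abs, abs_inv, abs_of_pos hd0, ← hddef]
    field_simp
  -- integrability facts
  have hh₀int : Integrable (fun ω => h₀ • ε ω) := by
    have := (LinearIsometry.toContinuousLinearMap
      ⟨IsLinearMap.mk' (fun m : M => h₀ • m) (hlin h₀ hh₀), hiso h₀ hh₀⟩).integrable_comp hint
    exact this
  have hψint : Integrable (fun ω => ⟪v, h₀ • ε ω⟫ - ⟪v, ε ω⟫) :=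
    (hh₀int.const_inner v).sub (hint.const_inner v)
  have hpospart : Integrable (fun ω => max (⟪v, h₀ • ε ω⟫ - ⟪v, ε ω⟫) 0) := hψint.pos_part
  -- the positive part has positive expectation
  have hvx : ⟪v, h₀ • x - x⟫ = d := by
    rw [hvdef, real_inner_smul_left, real_inner_self_eq_norm_sq, ← hddef]
    field_simp
  have hsupport : ε ⁻¹' Metric.ball x (d / 4)
      ⊆ Function.support (fun ω => max (⟪v, h₀ • ε ω⟫ - ⟪v, ε ω⟫) 0) := by
    intro ω hω
    have hball : ‖ε ω - x‖ < d / 4 := by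
      simpa [Metric.mem_ball, dist_eq_norm] using hω
    have hdecomp : h₀ • ε ω - ε ω = (h₀ • x - x) + (h₀ • (ε ω - x) - (ε ω - x)) := by
      have := (hlin h₀ hh₀).map_sub (ε ω) x
      rw [this]; abel
    have hsmall : |⟪v, h₀ • (ε ω - x) - (ε ω - x)⟫| < d / 2 := by
      calc |⟪v, h₀ • (ε ω - x) - (ε ω - x)⟫| ≤ ‖v‖ * ‖h₀ • (ε ω - x) - (ε ω - x)‖ :=
            abs_real_inner_le_norm _ _
        _ ≤ 1 * (‖h₀ • (ε ω - x)‖ + ‖ε ω - x‖) := by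
            rw [hv1]; exact mul_le_mul_of_nonneg_left (norm_sub_le _ _) zero_le_one
        _ = 2 * ‖ε ω - x‖ := by rw [hiso h₀ hh₀]; ring
        _ < d / 2 := by linarith
    have hψ : ⟪v, h₀ • ε ω⟫ - ⟪v, ε ω⟫ > 0 := by
      have : ⟪v, h₀ • ε ω⟫ - ⟪v, ε ω⟫ = ⟪v, h₀ • ε ω - ε ω⟫ := (inner_sub_right _ _ _).symm
      rw [this, hdecomp, inner_add_right, hvx]
      have := abs_lt.mp hsmall
      linarith [this.1]
    simp only [Function.mem_support]
    positivity
  have hppos : 0 < ∫ ω, max (⟪v, h₀ • ε ω⟫ - ⟪v, ε ω⟫) 0 := by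
    refine (integral_pos_iff_support_of_nonneg (fun ω => le_max_right _ _) hpospart).mpr ?_
    exact lt_of_lt_of_le (hx (d / 4) (by positivity)) (measure_mono hsupport)
  -- the mean of ⟪v, ε⟫ is nonnegative
  have hb : 0 ≤ ∫ ω, ⟪v, ε ω⟫ := by
    have hle := hS_le (-v) (by rw [norm_neg, hv1])
    have hpoint : ∀ ω, ⟪-v, ε ω⟫ ≤ ⨆ h : H, ⟪-v, (h : G) • ε ω⟫ := by
      intro ω
      have := le_ciSup (hbdd (-v) (ε ω)) (1 : H)
      simpa using this
    have hmono : (∫ ω, ⟪-v, ε ω⟫) ≤ ∫ ω, ⨆ h : H, ⟪-v, (h : G) • ε ω⟫ :=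
      integral_mono (hint.const_inner _) (hintsupH _ (by rw [norm_neg, hv1])) hpoint
    have hneg : (∫ ω, ⟪-v, ε ω⟫) = -∫ ω, ⟪v, ε ω⟫ := by
      simp [inner_neg_left, integral_neg]
    linarith [hmono.trans hle, hneg ▸ (hmono.trans hle)]
  -- lower bound for the supremum
  have hSv : (∫ ω, ⟪v, ε ω⟫ + max (⟪v, h₀ • ε ω⟫ - ⟪v, ε ω⟫) 0)
      ≤ ∫ ω, ⨆ h : H, ⟪v, (h : G) • ε ω⟫ := by
    refine integral_mono ((hint.const_inner v).add hpospart) (hintsupH v hv1) fun ω => ?_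
    have h1 : ⟪v, ε ω⟫ ≤ ⨆ h : H, ⟪v, (h : G) • ε ω⟫ := by
      have := le_ciSup (hbdd v (ε ω)) (1 : H)
      simpa using this
    have h2 : ⟪v, h₀ • ε ω⟫ ≤ ⨆ h : H, ⟪v, (h : G) • ε ω⟫ := by
      have := le_ciSup (hbdd v (ε ω)) (⟨h₀, hh₀⟩ : H)
      simpa using this
    have heq : ⟪v, ε ω⟫ + max (⟪v, h₀ • ε ω⟫ - ⟪v, ε ω⟫) 0
        = max ⟪v, h₀ • ε ω⟫ ⟪v, ε ω⟫ := by
      rcases le_total ⟪v, h₀ • ε ω⟫ ⟪v, ε ω⟫ with hle | hle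
      · rw [max_eq_right (by linarith : ⟪v, h₀ • ε ω⟫ - ⟪v, ε ω⟫ ≤ 0), max_eq_right hle]; ring
      · rw [max_eq_left (by linarith : (0:ℝ) ≤ ⟪v, h₀ • ε ω⟫ - ⟪v, ε ω⟫), max_eq_left hle]; ring
    rw [heq]
    exact max_le h2 h1
  rw [integral_add (hint.const_inner v) hpospart] at hSv
  have := hS_le v hv1
  linarith
end

section
/- In the max-max algorithm for a finite group G acting by linear isometries on a Hilbert space M with sample Y₁,…,Y_I, the sequence of iterates (m_n) becomes stationary in a finite number of steps: there exists n with m_{n+1} = m_n, and the empirical variance F_I(m_n) is non-increasing along the iterations. -/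
open RealInnerProductSpace

lemma aux_expand {M : Type*} [NormedAddCommGroup M] [InnerProductSpace ℝ M]
    {I : ℕ} (a : Fin I → M) (y : M) :
    ∑ i, ‖y - a i‖ ^ 2 =
      I * ‖y‖ ^ 2 - 2 * ⟪y, ∑ j, a j⟫ + ∑ i, ‖a i‖ ^ 2 := by
  simp only [norm_sub_sq_real, inner_sum]
  rw [Finset.sum_add_distrib, Finset.sum_sub_distrib, Finset.sum_const, Finset.card_univ,
    Fintype.card_fin, Finset.mul_sum, nsmul_eq_mul]

lemma aux_bv {M : Type*} [NormedAddCommGroup M] [InnerProductSpace ℝ M]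
    {I : ℕ} (a : Fin I → M) (c x : M) (hs : ∑ j, a j = (I : ℝ) • c) :
    ∑ i, ‖x - a i‖ ^ 2 = ∑ i, ‖c - a i‖ ^ 2 + I * ‖x - c‖ ^ 2 := by
  rw [aux_expand, aux_expand, hs, real_inner_smul_right, real_inner_smul_right,
    real_inner_self_eq_norm_sq, norm_sub_sq_real]
  ring

/-- For a finite group acting by linear isometries, the max-max algorithm
(alternating registration and averaging) makes the empirical variance
non-increasing and becomes stationary after a finite number of steps. -/
theorem stmt15 {M : Type*} [NormedAddCommGroup M] [InnerProductSpace ℝ M]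
    {G : Type*} [Group G] [Fintype G] (ρ : G →* (M →ₗᵢ[ℝ] M))
    {I : ℕ} (Y : Fin I → M) (m : ℕ → M) (g : ℕ → Fin I → G)
    (hreg : ∀ n i, ∀ g' : G, ‖m n - ρ (g n i) (Y i)‖ ≤ ‖m n - ρ g' (Y i)‖)
    (hupd : ∀ n, m (n + 1) = (I : ℝ)⁻¹ • ∑ i, ρ (g n i) (Y i)) :
    (∀ n, ((I : ℝ)⁻¹ * ∑ i, ⨅ g' : G, ‖m (n + 1) - ρ g' (Y i)‖ ^ 2) ≤
      (I : ℝ)⁻¹ * ∑ i, ⨅ g' : G, ‖m n - ρ g' (Y i)‖ ^ 2) ∧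
    ∃ n, m (n + 1) = m n := by
  by_cases hI : I = 0
  · subst hI
    refine ⟨fun n => by simp, 1, by rw [hupd 1, hupd 0]; simp⟩
  have hIne : (I : ℝ) ≠ 0 := Nat.cast_ne_zero.2 hI
  have hmean : ∀ n, ∑ i, ρ (g n i) (Y i) = (I : ℝ) • m (n + 1) := by
    intro n; rw [hupd n, smul_smul, mul_inv_cancel₀ hIne, one_smul]
  have hinf : ∀ n i, (⨅ g' : G, ‖m n - ρ g' (Y i)‖ ^ 2) = ‖m n - ρ (g n i) (Y i)‖ ^ 2 := by
    intro n i
    refine le_antisymm (ciInf_le (Finite.bddBelow_range _) _) (le_ciInf fun g' => ?_)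
    exact pow_le_pow_left₀ (norm_nonneg _) (hreg n i g') 2
  have key : ∀ n, (∑ i, ⨅ g' : G, ‖m (n + 1) - ρ g' (Y i)‖ ^ 2) + I * ‖m n - m (n + 1)‖ ^ 2 ≤
      ∑ i, ⨅ g' : G, ‖m n - ρ g' (Y i)‖ ^ 2 := by
    intro n
    have h1 : (∑ i, ⨅ g' : G, ‖m (n + 1) - ρ g' (Y i)‖ ^ 2) ≤
        ∑ i, ‖m (n + 1) - ρ (g n i) (Y i)‖ ^ 2 :=
      Finset.sum_le_sum fun i _ => ciInf_le (Finite.bddBelow_range _) _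
    have h2 : ∑ i, ‖m n - ρ (g n i) (Y i)‖ ^ 2
        = (∑ i, ‖m (n + 1) - ρ (g n i) (Y i)‖ ^ 2) + I * ‖m n - m (n + 1)‖ ^ 2 :=
      aux_bv _ _ _ (hmean n)
    rw [show (∑ i, ⨅ g' : G, ‖m n - ρ g' (Y i)‖ ^ 2)
        = ∑ i, ‖m n - ρ (g n i) (Y i)‖ ^ 2 from Finset.sum_congr rfl fun i _ => hinf n i, h2]
    linarith
  constructor
  · intro n
    have h := key n
    have hnn : (0 : ℝ) ≤ I * ‖m n - m (n + 1)‖ ^ 2 := by positivity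
    exact mul_le_mul_of_nonneg_left (by linarith) (by positivity)
  · by_contra h
    push_neg at h
    have hstrict : ∀ n, (∑ i, ⨅ g' : G, ‖m (n + 1) - ρ g' (Y i)‖ ^ 2) <
        ∑ i, ⨅ g' : G, ‖m n - ρ g' (Y i)‖ ^ 2 := by
      intro n
      have hk := key n
      have hne : m n - m (n + 1) ≠ 0 := sub_ne_zero.2 (Ne.symm (h n))
      have hd : (0 : ℝ) < I * ‖m n - m (n + 1)‖ ^ 2 :=
        mul_pos (Nat.cast_pos.2 (Nat.pos_of_ne_zero hI)) (pow_pos (norm_pos_iff.2 hne) 2)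
      linarith
    have hanti : StrictAnti (fun n => ∑ i, ⨅ g' : G, ‖m n - ρ g' (Y i)‖ ^ 2) :=
      strictAnti_nat_of_succ_lt hstrict
    have hinj : Function.Injective m := fun a b hab =>
      hanti.injective (by simp only [hab])
    have hinj2 : Function.Injective (fun n => m (n + 1)) := fun a b hab =>
      Nat.succ_injective (hinj hab)
    have hfin : (Set.range fun n => m (n + 1)).Finite := by
      refine (Set.finite_range
        (fun gg : Fin I → G => (I : ℝ)⁻¹ • ∑ i, ρ (gg i) (Y i))).subset ?_
      rintro x ⟨n, rfl⟩
      exact ⟨g n, (hupd n).symm⟩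
    exact Set.infinite_range_of_injective hinj2 hfin
end

section
/- Let G be a finite group of linear isometries of a Hilbert space M and m̂ a fixed point of the max-max algorithm (m̂ = (1/I)∑ᵢ gᵢ·Yᵢ where each gᵢ is a minimizer of g ↦ ‖m̂ − g·Yᵢ‖). If for each i the registration of Yᵢ with respect to m̂ is unique (the minimizing gᵢ is unique), then m̂ is a local minimum of the empirical variance F_I(x) = (1/I)∑ᵢ min_{g∈G} ‖x − g·Yᵢ‖². -/
open RealInnerProductSpace

lemma stmt16_ciInf_eq {G : Type*} [Fintype G] [Nonempty G] (f : G → ℝ) (g₀ : G)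
    (h : ∀ g, f g₀ ≤ f g) : (⨅ g, f g) = f g₀ :=
  le_antisymm (ciInf_le (Set.Finite.bddBelow (Set.finite_range f)) g₀) (le_ciInf h)

/-- If `m̂` is a fixed point of the max-max algorithm for a finite group of
linear isometries and the registration of each `Yᵢ` with respect to `m̂` is
unique, then `m̂` is a local minimum of the empirical variance `F_I`. -/
theorem stmt16 {M : Type*} [NormedAddCommGroup M] [InnerProductSpace ℝ M]
    {G : Type*} [Group G] [Fintype G] (ρ : G →* (M →ₗᵢ[ℝ] M))
    {I : ℕ} (Y : Fin I → M) (mhat : M) (ghat : Fin I → G)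
    (hreg : ∀ i, ∀ g' : G, ‖mhat - ρ (ghat i) (Y i)‖ ≤ ‖mhat - ρ g' (Y i)‖)
    (hfix : mhat = (I : ℝ)⁻¹ • ∑ i, ρ (ghat i) (Y i))
    (huniq : ∀ i, ∀ g' : G,
      ‖mhat - ρ g' (Y i)‖ = ‖mhat - ρ (ghat i) (Y i)‖ → g' = ghat i) :
    IsLocalMin (fun x : M => (I : ℝ)⁻¹ * ∑ i, ⨅ g' : G, ‖x - ρ g' (Y i)‖ ^ 2)
      mhat := by
  -- the sum of the registered deviations vanishes
  have hsum0 : ∑ i, (mhat - ρ (ghat i) (Y i)) = 0 := by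
    rcases eq_or_ne I 0 with hI | hI
    · subst hI; simp
    · have hI' : (I : ℝ) ≠ 0 := Nat.cast_ne_zero.mpr hI
      have : ∑ i : Fin I, mhat = ∑ i, ρ (ghat i) (Y i) := by
        rw [Finset.sum_const, Finset.card_univ, Fintype.card_fin, hfix,
          ← Nat.cast_smul_eq_nsmul ℝ, smul_smul, mul_inv_cancel₀ hI', one_smul]
      rw [Finset.sum_sub_distrib, this, sub_self]
  -- eventually, `ghat i` is still a registration
  have key : ∀ᶠ x in nhds mhat, ∀ i, ∀ g : G,
      ‖x - ρ (ghat i) (Y i)‖ ≤ ‖x - ρ g (Y i)‖ := by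
    rw [Filter.eventually_all]
    intro i
    rw [Filter.eventually_all]
    intro g
    by_cases hg : g = ghat i
    · subst hg; exact Filter.Eventually.of_forall fun x => le_rfl
    · have hlt : ‖mhat - ρ (ghat i) (Y i)‖ < ‖mhat - ρ g (Y i)‖ :=
        lt_of_le_of_ne (hreg i g) fun h => hg (huniq i g h.symm)
      have hc : ContinuousAt
          (fun x : M => ‖x - ρ (ghat i) (Y i)‖ - ‖x - ρ g (Y i)‖) mhat := by
        fun_prop
      have h0 : (fun x : M => ‖x - ρ (ghat i) (Y i)‖ - ‖x - ρ g (Y i)‖) mhat < 0 := by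
        simpa using sub_neg.mpr hlt
      have := hc.tendsto.eventually_lt_const h0
      exact this.mono fun x hx => by linarith [hx]
  refine key.mono fun x hx => ?_
  -- compute the infima
  have hFx : ∀ i, (⨅ g' : G, ‖x - ρ g' (Y i)‖ ^ 2) = ‖x - ρ (ghat i) (Y i)‖ ^ 2 :=
    fun i => stmt16_ciInf_eq _ (ghat i)
      fun g => pow_le_pow_left₀ (norm_nonneg _) (hx i g) 2
  have hFm : ∀ i, (⨅ g' : G, ‖mhat - ρ g' (Y i)‖ ^ 2) = ‖mhat - ρ (ghat i) (Y i)‖ ^ 2 :=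
    fun i => stmt16_ciInf_eq _ (ghat i)
      fun g => pow_le_pow_left₀ (norm_nonneg _) (hreg i g) 2
  simp only [hFx, hFm]
  have expand : ∀ i : Fin I, ‖x - ρ (ghat i) (Y i)‖ ^ 2
      = ‖x - mhat‖ ^ 2 + 2 * ⟪x - mhat, mhat - ρ (ghat i) (Y i)⟫
        + ‖mhat - ρ (ghat i) (Y i)‖ ^ 2 := fun i => by
    rw [show x - ρ (ghat i) (Y i) = (x - mhat) + (mhat - ρ (ghat i) (Y i)) by abel,
      norm_add_sq_real]
  have hsum : ∑ i, ‖x - ρ (ghat i) (Y i)‖ ^ 2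
      = (I : ℝ) * ‖x - mhat‖ ^ 2 + ∑ i, ‖mhat - ρ (ghat i) (Y i)‖ ^ 2 := by
    simp only [expand]
    rw [Finset.sum_add_distrib, Finset.sum_add_distrib, Finset.sum_const,
      Finset.card_univ, Fintype.card_fin, ← Finset.mul_sum, ← inner_sum, hsum0]
    simp [nsmul_eq_mul]
  have hle : ∑ i, ‖mhat - ρ (ghat i) (Y i)‖ ^ 2
      ≤ ∑ i, ‖x - ρ (ghat i) (Y i)‖ ^ 2 := by
    rw [hsum]
    nlinarith [sq_nonneg ‖x - mhat‖, Nat.cast_nonneg (α := ℝ) I]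
  exact mul_le_mul_of_nonneg_left hle (by positivity)
end

section
/- Let V be a closed linear subspace of a Hilbert space M, with G = V acting on M by translations (v·m = m + v). Then the variance F(m) = E(inf_{v∈V} ‖m + v − Y‖²) equals E(‖p(m) − p(Y)‖²) where p is the orthogonal projection onto V^⊥; consequently, for Y = t₀ + Φ + σε with Φ random in V and ε centered independent noise, t₀ minimizes F (template estimation is consistent). -/
open MeasureTheory ProbabilityTheory RealInnerProductSpace

lemma aux_inf_eq {M : Type*} [NormedAddCommGroup M] [InnerProductSpace ℝ M]
    (V : Submodule ℝ M) [Submodule.HasOrthogonalProjection V] [Submodule.HasOrthogonalProjection Vᗮ] (x : M) :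
    ⨅ v : V, ‖x + (v : M)‖ ^ 2 = ‖(Submodule.orthogonalProjectionOnto Vᗮ x : M)‖ ^ 2 := by
  have hdecomp : (Submodule.orthogonalProjectionOnto V x : M) + (Submodule.orthogonalProjectionOnto Vᗮ x : M) = x :=
    Submodule.starProjection_add_starProjection_orthogonal (K := V) x
  apply le_antisymm
  · have hb : BddBelow (Set.range fun v : V => ‖x + (v : M)‖ ^ 2) :=
      ⟨0, by rintro _ ⟨v, rfl⟩; positivity⟩
    refine ciInf_le_of_le hb (-(Submodule.orthogonalProjectionOnto V x)) ?_
    have h : x + ((-(Submodule.orthogonalProjectionOnto V x) : V) : M) = (Submodule.orthogonalProjectionOnto Vᗮ x : M) := by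
      push_cast
      nth_rewrite 1 [← hdecomp]
      abel
    rw [h]
  · refine le_ciInf fun v => ?_
    have h1 : x + (v : M) =
        ((Submodule.orthogonalProjectionOnto V x : M) + v) + (Submodule.orthogonalProjectionOnto Vᗮ x : M) := by
      nth_rewrite 1 [← hdecomp]
      abel
    have h2 : ⟪(Submodule.orthogonalProjectionOnto V x : M) + (v : M), (Submodule.orthogonalProjectionOnto Vᗮ x : M)⟫ = 0 := by
      apply Submodule.inner_right_of_mem_orthogonal (K := V)
      · exact add_mem (Submodule.orthogonalProjectionOnto V x).2 v.2
      · exact (Submodule.orthogonalProjectionOnto Vᗮ x).2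
    rw [h1, norm_add_sq_real, h2]
    nlinarith [sq_nonneg ‖(Submodule.orthogonalProjectionOnto V x : M) + (v : M)‖]

/-- For the translation action of a closed subspace `V` on a Hilbert space `M`,
the variance satisfies `F(m) = E(‖p(m) - p(Y)‖²)` where `p` is the orthogonal
projection onto `Vᗮ`; consequently, for `Y = t₀ + Φ + σε` with `Φ` random in
`V` and `ε` centered, the template `t₀` minimizes `F`: estimation is
consistent. -/
theorem stmt18 {M : Type*} [NormedAddCommGroup M] [InnerProductSpace ℝ M]
    [CompleteSpace M] (V : Submodule ℝ M) (hV : IsClosed (V : Set M))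
    [Submodule.HasOrthogonalProjection Vᗮ]
    {Ω : Type*} [MeasureSpace Ω] [IsProbabilityMeasure (ℙ : Measure Ω)]
    (t₀ : M) (σ : ℝ) (Φ : Ω → V) (ε : Ω → M)
    (hint : Integrable ε) (hmean : (∫ ω, ε ω) = 0)
    (hε2 : Integrable (fun ω => ‖ε ω‖ ^ 2))
    (hΦ2 : Integrable (fun ω => ‖(Φ ω : M)‖ ^ 2))
    (F : M → ℝ)
    (hF : ∀ m, F m = ∫ ω, ⨅ v : V, ‖m + (v : M) - (t₀ + (Φ ω : M) + σ • ε ω)‖ ^ 2) :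
    (∀ m, F m = ∫ ω, ‖(Submodule.orthogonalProjectionOnto Vᗮ m : M) -
        (Submodule.orthogonalProjectionOnto Vᗮ (t₀ + (Φ ω : M) + σ • ε ω) : M)‖ ^ 2) ∧
    (∀ m, F t₀ ≤ F m) := by
  haveI : CompleteSpace V := hV.completeSpace_coe
  set p := Submodule.orthogonalProjectionOnto Vᗮ with hp
  have h1 : ∀ m, F m = ∫ ω, ‖(p m : M) - (p (t₀ + (Φ ω : M) + σ • ε ω) : M)‖ ^ 2 := by
    intro m
    rw [hF m]
    congr 1
    funext ω
    have h := aux_inf_eq V (m - (t₀ + (Φ ω : M) + σ • ε ω))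
    rw [map_sub, Submodule.coe_sub] at h
    rw [← h]
    congr 1
    funext v
    congr 1
    abel
  refine ⟨h1, fun m => ?_⟩
  have hpY : ∀ ω, (p (t₀ + (Φ ω : M) + σ • ε ω) : M) = (p t₀ : M) + σ • (p (ε ω) : M) := by
    intro ω
    have hΦ0 : p ((Φ ω : M)) = 0 := by
      apply Submodule.orthogonalProjectionOnto_apply_of_mem_orthogonal
      exact Submodule.le_orthogonal_orthogonal V (Φ ω).2
    rw [map_add, map_add, p.map_smul, hΦ0, add_zero]
    push_cast
    ring_nf
  -- integrability
  have hpε_int : Integrable (fun ω => ((p (ε ω) : M))) := by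
    have h := (Vᗮ.subtypeL.comp (p : M →L[ℝ] Vᗮ)).integrable_comp hint
    simpa using h
  have hnorm_le : ∀ x : M, ‖(p x : M)‖ ≤ ‖x‖ := by
    intro x
    have h := (p : M →L[ℝ] Vᗮ).le_of_opNorm_le (Submodule.orthogonalProjectionOnto_norm_le Vᗮ) x
    simpa using h
  have hpε2_int : Integrable (fun ω => ‖(p (ε ω) : M)‖ ^ 2) := by
    refine hε2.mono' ?_ ?_
    · exact (((Vᗮ.subtypeL.comp (p : M →L[ℝ] Vᗮ)).continuous.norm.pow 2).comp_aestronglyMeasurable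
        hint.1)
    · filter_upwards with ω
      rw [Real.norm_eq_abs, abs_of_nonneg (by positivity)]
      exact pow_le_pow_left₀ (norm_nonneg _) (hnorm_le _) 2
  have hmean0 : (∫ ω, ((p (ε ω) : M))) = 0 := by
    have h := (Vᗮ.subtypeL.comp (p : M →L[ℝ] Vᗮ)).integral_comp_comm hint
    simp only [ContinuousLinearMap.coe_comp', Function.comp_apply,
      Submodule.coe_subtypeL', Submodule.coe_subtype] at h
    rw [h, hmean, map_zero, Submodule.coe_zero]
  -- general computation of F at any point with offset b
  have hcalc : ∀ b : M,
      (∫ ω, ‖b - σ • (p (ε ω) : M)‖ ^ 2) = ‖b‖ ^ 2 + σ ^ 2 * ∫ ω, ‖(p (ε ω) : M)‖ ^ 2 := by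
    intro b
    have hinner : Integrable (fun ω => ⟪b, (p (ε ω) : M)⟫) := hpε_int.const_inner b
    have hexp : ∀ ω, ‖b - σ • (p (ε ω) : M)‖ ^ 2 =
        ‖b‖ ^ 2 + σ ^ 2 * ‖(p (ε ω) : M)‖ ^ 2 - 2 * σ * ⟪b, (p (ε ω) : M)⟫ := by
      intro ω
      rw [norm_sub_sq_real, real_inner_smul_right, norm_smul]
      rw [mul_pow, Real.norm_eq_abs, sq_abs]
      ring
    simp_rw [hexp]
    rw [integral_sub (by exact (integrable_const _).add (hpε2_int.const_mul _))
        (hinner.const_mul _)]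
    rw [integral_add (integrable_const _) (hpε2_int.const_mul _)]
    rw [integral_const, integral_const_mul, integral_const_mul]
    rw [integral_inner hpε_int b, hmean0, inner_zero_right]
    simp
  have hFm : ∀ m', F m' = ‖(p m' : M) - (p t₀ : M)‖ ^ 2 + σ ^ 2 * ∫ ω, ‖(p (ε ω) : M)‖ ^ 2 := by
    intro m'
    rw [h1 m', ← hcalc ((p m' : M) - (p t₀ : M))]
    congr 1
    funext ω
    rw [hpY ω]
    congr 1
    abel
  rw [hFm m, hFm t₀]
  have : ((p t₀ : M) - (p t₀ : M)) = 0 := sub_self _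
  rw [this, norm_zero]
  nlinarith [sq_nonneg ‖(p m : M) - (p t₀ : M)‖]
end
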